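/- arXiv:2105.08000 — 6 statements merged into one kernel-verified Lean document; each statement's English description precedes it below -/
import Mathlib

section
/- Let S be a nonempty additive commutative semigroup, G a group, and f, f' : S → G polynomial maps of degree ≤ d and ≤ d' respectively. If the subgroup of G generated by f(S) ∪ f'(S) is nilpotent, then the elementwise product f·f' : S → G, t ↦ f(t)·f'(t), is a polynomial map (of some finite degree). -/
namespace PaperPoly

/-- `DegLE d f` means that `f : S → G` is a polynomial map of degree at most `d ∈ ℕ`:
the base case `DegLE 0 f` means `f` is constant, and `DegLE (d+1) f` means that for every
`s : S` both difference maps `L_s f : t ↦ f (s+t) * (f t)⁻¹` and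
`R_s f : t ↦ (f t)⁻¹ * f (s+t)` satisfy `DegLE d`. -/
def DegLE {S : Type*} [AddCommSemigroup S] {G : Type*} [Group G] : ℕ → (S → G) → Prop
  | 0 => fun f => ∀ t t' : S, f t = f t'
  | d + 1 => fun f => ∀ s : S,
      DegLE d (fun t => f (s + t) * (f t)⁻¹) ∧ DegLE d (fun t => (f t)⁻¹ * f (s + t))

/-- `f` is a polynomial map (of some finite degree). -/
def IsPoly {S : Type*} [AddCommSemigroup S] {G : Type*} [Group G] (f : S → G) : Prop :=
  ∃ d : ℕ, DegLE d f

/-! ### Auxiliary group-theoretic lemmas -/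

/-- The three subgroups lemma, general form. -/
theorem three_subgroups {G : Type*} [Group G] {H₁ H₂ H₃ N : Subgroup G} [N.Normal]
    (h1 : ⁅⁅H₂, H₃⁆, H₁⁆ ≤ N) (h2 : ⁅⁅H₃, H₁⁆, H₂⁆ ≤ N) : ⁅⁅H₁, H₂⁆, H₃⁆ ≤ N := by
  let π := QuotientGroup.mk' N
  have hker : π.ker = N := QuotientGroup.ker_mk' N
  rw [← hker, ← Subgroup.map_eq_bot_iff, Subgroup.map_commutator, Subgroup.map_commutator]
    at h1 h2 ⊢
  exact Subgroup.commutator_commutator_eq_bot_of_rotate h1 h2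

theorem lcs_succ_eq {G : Type*} [Group G] (n : ℕ) :
    (⊤ : Subgroup G).lowerCentralSeries (n + 1) = ⁅(⊤ : Subgroup G).lowerCentralSeries n, ⊤⁆ := rfl

/-- Superadditivity of the lower central series (weak form). -/
theorem lcs_comm {G : Type*} [Group G] :
    ∀ (b a : ℕ), ⁅(⊤ : Subgroup G).lowerCentralSeries a, (⊤ : Subgroup G).lowerCentralSeries b⁆ ≤
      (⊤ : Subgroup G).lowerCentralSeries (a + b + 1) := by
  intro b
  induction b with
  | zero =>
    intro a
    rw [lowerCentralSeries_zero]
    exact le_of_eq (lcs_succ_eq a).symm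
  | succ b ih =>
    intro a
    rw [lcs_succ_eq b, Subgroup.commutator_comm]
    refine three_subgroups ?_ ?_
    · calc ⁅⁅(⊤ : Subgroup G), (⊤ : Subgroup G).lowerCentralSeries a⁆, (⊤ : Subgroup G).lowerCentralSeries b⁆
          = ⁅(⊤ : Subgroup G).lowerCentralSeries (a+1), (⊤ : Subgroup G).lowerCentralSeries b⁆ := by
            rw [Subgroup.commutator_comm (⊤ : Subgroup G), ← lcs_succ_eq]
        _ ≤ (⊤ : Subgroup G).lowerCentralSeries (a + 1 + b + 1) := ih (a+1)
        _ ≤ (⊤ : Subgroup G).lowerCentralSeries (a + (b+1) + 1) := by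
            apply lowerCentralSeries_antitone; omega
    · calc ⁅⁅(⊤ : Subgroup G).lowerCentralSeries a, (⊤ : Subgroup G).lowerCentralSeries b⁆, (⊤ : Subgroup G)⁆
          ≤ ⁅(⊤ : Subgroup G).lowerCentralSeries (a+b+1), (⊤ : Subgroup G)⁆ :=
            Subgroup.commutator_mono (ih a) le_rfl
        _ = (⊤ : Subgroup G).lowerCentralSeries (a + b + 1 + 1) := (lcs_succ_eq _).symm
        _ ≤ (⊤ : Subgroup G).lowerCentralSeries (a + (b+1) + 1) := by
            apply lowerCentralSeries_antitone; omega

/-! ### Basic lemmas about `DegLE` -/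

section DegLE

variable {S : Type*} [AddCommSemigroup S] {G : Type*} [Group G]

theorem degLE_congr {d : ℕ} {f g : S → G} (h : ∀ t, f t = g t) (hf : DegLE d f) :
    DegLE d g := by
  have : f = g := funext h
  exact this ▸ hf

theorem degLE_succ {d : ℕ} {f : S → G} (h : DegLE d f) : DegLE (d + 1) f := by
  induction d generalizing f with
  | zero =>
    intro s
    constructor
    · intro t t'
      show f (s + t) * (f t)⁻¹ = f (s + t') * (f t')⁻¹
      rw [h (s + t) t, h (s + t') t']
      simp
    · intro t t'
      show (f t)⁻¹ * f (s + t) = (f t')⁻¹ * f (s + t')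
      rw [← h t (s + t), ← h t' (s + t')]
      simp
  | succ d ih =>
    intro s
    exact ⟨ih (h s).1, ih (h s).2⟩

theorem degLE_mono {d e : ℕ} (hde : d ≤ e) {f : S → G} (h : DegLE d f) : DegLE e f := by
  induction hde with
  | refl => exact h
  | step _ ih => exact degLE_succ ih

theorem degLE_comp_hom {H : Type*} [Group H] (φ : G →* H) {d : ℕ} {f : S → G}
    (h : DegLE d f) : DegLE d (fun t => φ (f t)) := by
  induction d generalizing f with
  | zero => exact fun t t' => congrArg φ (h t t')
  | succ d ih =>
    intro s
    constructor
    · exact degLE_congr (fun t => by simp) (ih (h s).1)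
    · exact degLE_congr (fun t => by simp) (ih (h s).2)

theorem degLE_comp_inj {H : Type*} [Group H] (φ : H →* G) (hφ : Function.Injective φ)
    {d : ℕ} {f : S → H} (h : DegLE d (fun t => φ (f t))) : DegLE d f := by
  induction d generalizing f with
  | zero => exact fun t t' => hφ (h t t')
  | succ d ih =>
    intro s
    constructor
    · exact ih (degLE_congr (fun t => by simp) (h s).1)
    · exact ih (degLE_congr (fun t => by simp) (h s).2)

end DegLE

/-! ### Polynomial maps relative to a filtration -/

section Filtration

variable {S : Type*} [AddCommSemigroup S] {G : Type*} [Group G]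

/-- `PP N k m f` : all derivatives of `f` of order `q ≤ m` take values in `N (q + k)`. -/
def PP (N : ℕ → Subgroup G) : ℕ → ℕ → (S → G) → Prop
  | k, 0 => fun f => ∀ t, f t ∈ N k
  | k, m + 1 => fun f => (∀ t, f t ∈ N k) ∧ ∀ s : S,
      PP N (k + 1) m (fun t => f (s + t) * (f t)⁻¹) ∧
      PP N (k + 1) m (fun t => (f t)⁻¹ * f (s + t))

variable {N : ℕ → Subgroup G}

theorem PP_congr {k m : ℕ} {f g : S → G} (h : ∀ t, f t = g t) (hf : PP N k m f) :
    PP N k m g := by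
  have : f = g := funext h
  exact this ▸ hf

theorem PP_mono_m {k m : ℕ} {f : S → G} (h : PP N k (m + 1) f) : PP N k m f := by
  induction m generalizing k f with
  | zero => exact h.1
  | succ m ih => exact ⟨h.1, fun s => ⟨ih (h.2 s).1, ih (h.2 s).2⟩⟩

theorem PP_mono_k (hA : ∀ {i j : ℕ}, i ≤ j → N j ≤ N i) {k k' m : ℕ} (hkk : k' ≤ k)
    {f : S → G} (h : PP N k m f) : PP N k' m f := by
  induction m generalizing k k' f with
  | zero => exact fun t => hA hkk (h t)
  | succ m ih =>
    exact ⟨fun t => hA hkk (h.1 t), fun s =>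
      ⟨ih (Nat.succ_le_succ hkk) (h.2 s).1, ih (Nat.succ_le_succ hkk) (h.2 s).2⟩⟩

theorem PP_inv {k m : ℕ} {f : S → G} (h : PP N k m f) : PP N k m (fun t => (f t)⁻¹) := by
  induction m generalizing k f with
  | zero => exact fun t => inv_mem (h t)
  | succ m ih =>
    refine ⟨fun t => inv_mem (h.1 t), fun s => ⟨?_, ?_⟩⟩
    · exact PP_congr (fun t => by group) (ih (h.2 s).2)
    · exact PP_congr (fun t => by group) (ih (h.2 s).1)

theorem PP_shift {k m : ℕ} {f : S → G} (s₀ : S) (h : PP N k m f) :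
    PP N k m (fun t => f (s₀ + t)) := by
  induction m generalizing k f with
  | zero => exact fun t => h (s₀ + t)
  | succ m ih =>
    refine ⟨fun t => h.1 (s₀ + t), fun s => ⟨?_, ?_⟩⟩
    · refine PP_congr (fun t => ?_) (ih (h.2 s).1)
      show f (s + (s₀ + t)) * (f (s₀ + t))⁻¹ = f (s₀ + (s + t)) * (f (s₀ + t))⁻¹
      rw [add_left_comm]
    · refine PP_congr (fun t => ?_) (ih (h.2 s).2)
      show (f (s₀ + t))⁻¹ * f (s + (s₀ + t)) = (f (s₀ + t))⁻¹ * f (s₀ + (s + t))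
      rw [add_left_comm]

/-- The main induction: commutators and products of filtration-polynomial maps. -/
theorem PP_main (hA : ∀ {i j : ℕ}, i ≤ j → N j ≤ N i)
    (hC : ∀ (i j : ℕ) (x y : G), x ∈ N i → y ∈ N j → x⁻¹ * y⁻¹ * x * y ∈ N (i + j)) :
    ∀ m : ℕ,
      (∀ (j k : ℕ) (f g : S → G), PP N j m f → PP N k m g →
        PP N (j + k) m (fun t => (f t)⁻¹ * (g t)⁻¹ * f t * g t)) ∧
      (∀ (k : ℕ) (f g : S → G), PP N k m f → PP N k m g →
        PP N k m (fun t => f t * g t)) := by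
  intro m
  induction m with
  | zero =>
    exact ⟨fun j k f g hf hg t => hC j k _ _ (hf t) (hg t),
      fun k f g hf hg t => mul_mem (hf t) (hg t)⟩
  | succ m ih =>
    obtain ⟨ihc, ihm⟩ := ih
    constructor
    · -- commutator case
      intro j k f g hf hg
      refine ⟨fun t => hC j k _ _ (hf.1 t) (hg.1 t), fun s => ?_⟩
      have hfm : PP N j m f := PP_mono_m hf
      have hgm : PP N k m g := PP_mono_m hg
      have ha : PP N (j + 1) m (fun t => f (s + t) * (f t)⁻¹) := (hf.2 s).1
      have hb : PP N (k + 1) m (fun t => (g t)⁻¹ * g (s + t)) := (hg.2 s).2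
      have hgs : PP N k m (fun t => g (s + t)) := PP_shift s hgm
      -- A = c(a, g_s)
      have hAm : PP N (j + 1 + k) m (fun t =>
          (f (s + t) * (f t)⁻¹)⁻¹ * (g (s + t))⁻¹ * (f (s + t) * (f t)⁻¹) * g (s + t)) :=
        ihc (j + 1) k _ _ ha hgs
      -- A2 = c(A, f)
      have hA2 : PP N (j + 1 + k + j) m (fun t =>
          ((f (s + t) * (f t)⁻¹)⁻¹ * (g (s + t))⁻¹ * (f (s + t) * (f t)⁻¹) * g (s + t))⁻¹ *
            (f t)⁻¹ *
            ((f (s + t) * (f t)⁻¹)⁻¹ * (g (s + t))⁻¹ * (f (s + t) * (f t)⁻¹) * g (s + t)) *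
            f t) :=
        ihc (j + 1 + k) j _ _ hAm hfm
      have hT1 := ihm (j + 1 + k) _ _ hAm (PP_mono_k hA (by omega) hA2)
      -- T2 = c(f, b)
      have hT2 : PP N (j + (k + 1)) m (fun t =>
          (f t)⁻¹ * ((g t)⁻¹ * g (s + t))⁻¹ * f t * ((g t)⁻¹ * g (s + t))) :=
        ihc j (k + 1) _ _ hfm hb
      -- W = c(f, g)
      have hW : PP N (j + k) m (fun t => (f t)⁻¹ * (g t)⁻¹ * f t * g t) :=
        ihc j k _ _ hfm hgm
      have hWi := PP_inv hW
      -- T3 = c(b, W⁻¹)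
      have hT3 : PP N (k + 1 + (j + k)) m (fun t =>
          ((g t)⁻¹ * g (s + t))⁻¹ * ((f t)⁻¹ * (g t)⁻¹ * f t * g t)⁻¹⁻¹ *
            ((g t)⁻¹ * g (s + t)) * ((f t)⁻¹ * (g t)⁻¹ * f t * g t)⁻¹) :=
        ihc (k + 1) (j + k) _ _ hb hWi
      have hL0 := ihm (j + 1 + k) _ _
        (ihm (j + 1 + k) _ _ hT1 (PP_mono_k hA (by omega) hT2))
        (PP_mono_k hA (by omega) hT3)
      have hL : PP N (j + k + 1) m (fun t =>
          ((f (s + t))⁻¹ * (g (s + t))⁻¹ * f (s + t) * g (s + t)) *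
            ((f t)⁻¹ * (g t)⁻¹ * f t * g t)⁻¹) := by
        refine PP_mono_k hA (by omega) (PP_congr (fun t => ?_) hL0)
        group
      constructor
      · exact PP_congr (fun t => rfl) hL
      · -- R = L * c(L, W)
        have hcLW := ihc (j + k + 1) (j + k) _ _ hL hW
        have := ihm (j + k + 1) _ _ hL (PP_mono_k hA (by omega) hcLW)
        refine PP_congr (fun t => ?_) this
        group
    · -- product case
      intro k f g hf hg
      refine ⟨fun t => mul_mem (hf.1 t) (hg.1 t), fun s => ⟨?_, ?_⟩⟩
      · -- L_s(fg) = L_s f * L_s g * c(L_s g, f⁻¹)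
        have h1 : PP N (k + 1) m (fun t => f (s + t) * (f t)⁻¹) := (hf.2 s).1
        have h2 : PP N (k + 1) m (fun t => g (s + t) * (g t)⁻¹) := (hg.2 s).1
        have hfi : PP N k m (fun t => (f t)⁻¹) := PP_inv (PP_mono_m hf)
        have h3 := ihc (k + 1) k _ _ h2 hfi
        have := ihm (k + 1) _ _ (ihm (k + 1) _ _ h1 h2) (PP_mono_k hA (by omega) h3)
        refine PP_congr (fun t => ?_) this
        group
      · -- R_s(fg) = R_s f * c(R_s f, g) * R_s g
        have h1 : PP N (k + 1) m (fun t => (f t)⁻¹ * f (s + t)) := (hf.2 s).2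
        have h2 : PP N (k + 1) m (fun t => (g t)⁻¹ * g (s + t)) := (hg.2 s).2
        have hgm : PP N k m g := PP_mono_m hg
        have h3 := ihc (k + 1) k _ _ h1 hgm
        have := ihm (k + 1) _ _ (ihm (k + 1) _ _ h1 (PP_mono_k hA (by omega) h3)) h2
        refine PP_congr (fun t => ?_) this
        group

theorem PP_bot {m k : ℕ} {f : S → G} (hbot : N (m + k) = ⊥) (h : PP N k m f) :
    DegLE m f := by
  induction m generalizing k f with
  | zero =>
    intro t t'
    rw [Nat.zero_add] at hbot
    have h1 : f t ∈ N k := h t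
    have h2 : f t' ∈ N k := h t'
    rw [hbot, Subgroup.mem_bot] at h1 h2
    rw [h1, h2]
  | succ m ih =>
    intro s
    have hb : N (m + (k + 1)) = ⊥ := by rw [show m + (k + 1) = m + 1 + k by omega]; exact hbot
    exact ⟨ih hb (h.2 s).1, ih hb (h.2 s).2⟩

theorem degLE_PP {D : ℕ} (hD : ∀ q, q < D → N q = ⊤) :
    ∀ (m q : ℕ) (f : S → G),
      ((∀ t, f t = 1) ∨ (q < D ∧ DegLE (D - 1 - q) f)) → PP N q m f := by
  intro m
  induction m with
  | zero =>
    intro q f h t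
    rcases h with h | ⟨hq, _⟩
    · rw [h t]; exact one_mem _
    · rw [hD q hq]; trivial
  | succ m ih =>
    intro q f h
    have hval : ∀ t, f t ∈ N q := by
      intro t
      rcases h with h | ⟨hq, _⟩
      · rw [h t]; exact one_mem _
      · rw [hD q hq]; trivial
    refine ⟨hval, fun s => ?_⟩
    rcases h with h | ⟨hq, hdeg⟩
    · constructor
      · exact ih (q + 1) _ (Or.inl fun t => by rw [h (s + t), h t]; group)
      · exact ih (q + 1) _ (Or.inl fun t => by rw [h (s + t), h t]; group)
    · cases hd : D - 1 - q with
      | zero =>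
        rw [hd] at hdeg
        constructor
        · exact ih (q + 1) _ (Or.inl fun t => by rw [hdeg (s + t) t]; group)
        · exact ih (q + 1) _ (Or.inl fun t => by rw [hdeg (s + t) t]; group)
      | succ e =>
        rw [hd] at hdeg
        have hq1 : q + 1 < D := by omega
        have he : D - 1 - (q + 1) = e := by omega
        constructor
        · exact ih (q + 1) _ (Or.inr ⟨hq1, he ▸ (hdeg s).1⟩)
        · exact ih (q + 1) _ (Or.inr ⟨hq1, he ▸ (hdeg s).2⟩)

end Filtration

/-- If `f, f' : S → G` are polynomial maps of degree `≤ d` resp. `≤ d'` from a nonempty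
additive commutative semigroup `S` to a group `G`, and the subgroup of `G` generated by
`f(S) ∪ f'(S)` is nilpotent, then the elementwise product `t ↦ f t * f' t` is a
polynomial map. -/
theorem product_of_polynomial_maps {S : Type*} [AddCommSemigroup S] [Nonempty S]
    {G : Type*} [Group G] (f f' : S → G) (d d' : ℕ) (hf : DegLE d f) (hf' : DegLE d' f')
    (hnil : Group.IsNilpotent ↥(Subgroup.closure (Set.range f ∪ Set.range f'))) :
    IsPoly (fun t => f t * f' t) := by
  set H := Subgroup.closure (Set.range f ∪ Set.range f') with hH
  obtain ⟨n, hn⟩ := nilpotent_iff_lowerCentralSeries.mp hnil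
  set D : ℕ := max d d' + 1 with hD
  -- corestrictions to H
  have hmemf : ∀ t, f t ∈ H := fun t =>
    Subgroup.subset_closure (Set.mem_union_left _ ⟨t, rfl⟩)
  have hmemf' : ∀ t, f' t ∈ H := fun t =>
    Subgroup.subset_closure (Set.mem_union_right _ ⟨t, rfl⟩)
  set fH : S → H := fun t => ⟨f t, hmemf t⟩ with hfH
  set f'H : S → H := fun t => ⟨f' t, hmemf' t⟩ with hf'H
  have hinj : Function.Injective H.subtype := H.subtype_injective
  have hdf : DegLE (D - 1) fH := by
    apply degLE_comp_inj H.subtype hinj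
    exact degLE_congr (fun t => rfl) (degLE_mono (by omega : d ≤ D - 1) hf)
  have hdf' : DegLE (D - 1) f'H := by
    apply degLE_comp_inj H.subtype hinj
    exact degLE_congr (fun t => rfl) (degLE_mono (by omega : d' ≤ D - 1) hf')
  -- the filtration
  set N : ℕ → Subgroup H := fun q => (⊤ : Subgroup H).lowerCentralSeries (q / D) with hN
  have hA : ∀ {i j : ℕ}, i ≤ j → N j ≤ N i := fun hij =>
    lowerCentralSeries_antitone _ (Nat.div_le_div_right hij)
  have hC : ∀ (i j : ℕ) (x y : H), x ∈ N i → y ∈ N j → x⁻¹ * y⁻¹ * x * y ∈ N (i + j) := by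
    intro i j x y hx hy
    have hdiv : (i + j) / D ≤ i / D + j / D + 1 := by
      rcases Nat.eq_zero_or_pos D with hD0 | hD0
      · simp [hD0]
      have hi : i < (i / D + 1) * D := (Nat.div_lt_iff_lt_mul hD0).mp (Nat.lt_succ_self _)
      have hj : j < (j / D + 1) * D := (Nat.div_lt_iff_lt_mul hD0).mp (Nat.lt_succ_self _)
      have hij : i + j < (i / D + j / D + 2) * D := by
        calc i + j < (i / D + 1) * D + (j / D + 1) * D := Nat.add_lt_add hi hj
          _ = (i / D + j / D + 2) * D := by ring
      have := (Nat.div_lt_iff_lt_mul hD0).mpr hij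
      omega
    open scoped commutatorElement in
    have hmem : ⁅x⁻¹, y⁻¹⁆ ∈ ⁅(⊤ : Subgroup H).lowerCentralSeries (i / D), (⊤ : Subgroup H).lowerCentralSeries (j / D)⁆ :=
      Subgroup.commutator_mem_commutator (inv_mem hx) (inv_mem hy)
    have hle : ⁅(⊤ : Subgroup H).lowerCentralSeries (i / D), (⊤ : Subgroup H).lowerCentralSeries (j / D)⁆ ≤ N (i + j) := by
      refine (lcs_comm _ _).trans (lowerCentralSeries_antitone _ hdiv)
    have := hle hmem
    simpa [commutatorElement_def, mul_assoc] using this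
  have hmain := PP_main (N := N) (S := S) hA hC
  have hDP := degLE_PP (N := N) (S := S) (D := D)
    (fun q hq => by simp [hN, Nat.div_eq_of_lt hq, lowerCentralSeries_zero])
  have hPf : ∀ m, PP N 0 m fH := fun m =>
    hDP m 0 fH (Or.inr ⟨by omega, by simpa using hdf⟩)
  have hPf' : ∀ m, PP N 0 m f'H := fun m =>
    hDP m 0 f'H (Or.inr ⟨by omega, by simpa using hdf'⟩)
  have hmul := (hmain (D * n)).2 0 fH f'H (hPf _) (hPf' _)
  have hbot : N (D * n + 0) = ⊥ := by
    have : (D * n + 0) / D = n := by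
      rw [Nat.add_zero, Nat.mul_div_cancel_left _ (by omega : 0 < D)]
    rw [hN]; dsimp only; rw [this]; exact hn
  have hdeg : DegLE (D * n) (fun t => fH t * f'H t) := PP_bot hbot hmul
  refine ⟨D * n, ?_⟩
  have := degLE_comp_hom H.subtype hdeg
  exact degLE_congr (fun t => rfl) this

end PaperPoly
end

section
/- Let S be a nonempty additive commutative semigroup and G a nilpotent group of nilpotency class n. Then the set of all polynomial maps f : S → G, with group law given by elementwise multiplication (f·f')(t) = f(t)·f'(t), forms a group, and this group is nilpotent of nilpotency class exactly n. -/
namespace PaperPoly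

/-! ### Auxiliary machinery -/

section Aux

variable {S : Type*} [AddCommSemigroup S] {G : Type*} [Group G]

open scoped commutatorElement

/-- Left difference map. -/
def Lmap (s : S) (f : S → G) : S → G := fun t => f (s + t) * (f t)⁻¹

/-- Right difference map. -/
def Rmap (s : S) (f : S → G) : S → G := fun t => (f t)⁻¹ * f (s + t)

theorem degLE_succ_iff {d : ℕ} {f : S → G} :
    DegLE (d + 1) f ↔ ∀ s : S, DegLE d (Lmap s f) ∧ DegLE d (Rmap s f) := Iff.rfl

/-- A generalized three-subgroups lemma. -/
theorem three_subgroups_s2 {A B C N : Subgroup G} [N.Normal]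
    (h1 : ⁅⁅B, C⁆, A⁆ ≤ N) (h2 : ⁅⁅C, A⁆, B⁆ ≤ N) : ⁅⁅A, B⁆, C⁆ ≤ N := by
  let π := QuotientGroup.mk' N
  have key : ∀ X Y Z : Subgroup G, ⁅⁅X, Y⁆, Z⁆ ≤ N ↔
      ⁅⁅Subgroup.map π X, Subgroup.map π Y⁆, Subgroup.map π Z⁆ = ⊥ := by
    intro X Y Z
    rw [← Subgroup.map_commutator, ← Subgroup.map_commutator, Subgroup.map_eq_bot_iff,
      QuotientGroup.ker_mk']
  rw [key]
  exact Subgroup.commutator_commutator_eq_bot_of_rotate ((key B C A).mp h1) ((key C A B).mp h2)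

theorem lcs_comm_le (i j : ℕ) :
    ⁅Subgroup.lowerCentralSeries (⊤ : Subgroup G) i, Subgroup.lowerCentralSeries (⊤ : Subgroup G) j⁆ ≤ Subgroup.lowerCentralSeries (⊤ : Subgroup G) (i + j + 1) := by
  induction j generalizing i with
  | zero =>
    have h : Subgroup.lowerCentralSeries (⊤ : Subgroup G) (i + 1) = ⁅Subgroup.lowerCentralSeries (⊤ : Subgroup G) i, ⊤⁆ := rfl
    rw [lowerCentralSeries_zero]
    exact le_of_eq h.symm
  | succ j ih =>
    have hsucc : Subgroup.lowerCentralSeries (⊤ : Subgroup G) (j + 1) = ⁅Subgroup.lowerCentralSeries (⊤ : Subgroup G) j, ⊤⁆ := rfl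
    rw [hsucc, Subgroup.commutator_comm]
    apply three_subgroups_s2
    · -- ⁅⁅⊤, lcs i⁆, lcs j⁆ ≤ lcs (i + (j+1) + 1)
      rw [Subgroup.commutator_comm (⊤ : Subgroup G)]
      have h1 : ⁅Subgroup.lowerCentralSeries (⊤ : Subgroup G) i, (⊤ : Subgroup G)⁆ = Subgroup.lowerCentralSeries (⊤ : Subgroup G) (i + 1) := rfl
      rw [h1]
      have := ih (i + 1)
      have e : i + 1 + j + 1 = i + (j + 1) + 1 := by omega
      rwa [e] at this
    · -- ⁅⁅lcs i, lcs j⁆, ⊤⁆ ≤ lcs (i + (j+1) + 1)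
      have h1 : ⁅Subgroup.lowerCentralSeries (⊤ : Subgroup G) (i + j + 1), (⊤ : Subgroup G)⁆ =
          Subgroup.lowerCentralSeries (⊤ : Subgroup G) (i + j + 1 + 1) := rfl
      calc ⁅⁅Subgroup.lowerCentralSeries (⊤ : Subgroup G) i, Subgroup.lowerCentralSeries (⊤ : Subgroup G) j⁆, (⊤ : Subgroup G)⁆
          ≤ ⁅Subgroup.lowerCentralSeries (⊤ : Subgroup G) (i + j + 1), (⊤ : Subgroup G)⁆ :=
            Subgroup.commutator_mono (ih i) le_rfl
        _ = Subgroup.lowerCentralSeries (⊤ : Subgroup G) (i + j + 1 + 1) := h1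
        _ = Subgroup.lowerCentralSeries (⊤ : Subgroup G) (i + (j + 1) + 1) := by ring_nf

/-- Polynomial maps relative to a filtration `F`, truncated at derivative depth `m`,
at filtration level `k`. -/
def T (F : ℕ → Subgroup G) : ℕ → ℕ → (S → G) → Prop
  | 0, k, f => ∀ t, f t ∈ F k
  | m + 1, k, f => (∀ t, f t ∈ F k) ∧
      ∀ s : S, T F m (k + 1) (Lmap s f) ∧ T F m (k + 1) (Rmap s f)

variable {F : ℕ → Subgroup G}

theorem T_congr {m k : ℕ} {f g : S → G} (e : ∀ t, f t = g t) (h : T F m k f) : T F m k g := by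
  rwa [show f = g from funext e] at h

theorem T_val {m k : ℕ} {f : S → G} (h : T F m k f) : ∀ t, f t ∈ F k := by
  cases m with
  | zero => exact h
  | succ m => exact h.1

theorem T_mono_depth {m k : ℕ} {f : S → G} (h : T F (m + 1) k f) : T F m k f := by
  induction m generalizing k f with
  | zero => exact h.1
  | succ m ih => exact ⟨h.1, fun s => ⟨ih (h.2 s).1, ih (h.2 s).2⟩⟩

theorem T_mono_level (hanti : Antitone F) {m k k' : ℕ} {f : S → G} (hk : k ≤ k')
    (h : T F m k' f) : T F m k f := by
  induction m generalizing k k' f with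
  | zero => exact fun t => hanti hk (h t)
  | succ m ih =>
    exact ⟨fun t => hanti hk (h.1 t),
      fun s => ⟨ih (by omega) (h.2 s).1, ih (by omega) (h.2 s).2⟩⟩

theorem T_one {m k : ℕ} : T F m k (fun _ : S => (1 : G)) := by
  induction m generalizing k with
  | zero => exact fun t => one_mem _
  | succ m ih =>
    refine ⟨fun t => one_mem _, fun s => ⟨?_, ?_⟩⟩
    · exact T_congr (fun t => by simp [Lmap]) ih
    · exact T_congr (fun t => by simp [Rmap]) ih

theorem T_inv {m k : ℕ} {f : S → G} (h : T F m k f) : T F m k (fun t => (f t)⁻¹) := by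
  induction m generalizing k f with
  | zero => exact fun t => inv_mem (h t)
  | succ m ih =>
    refine ⟨fun t => inv_mem (h.1 t), fun s => ⟨?_, ?_⟩⟩
    · exact T_congr (fun t => by simp [Lmap, Rmap, mul_comm]) (ih (h.2 s).2)
    · exact T_congr (fun t => by simp [Lmap, Rmap, mul_comm]) (ih (h.2 s).1)

theorem T_shift {m k : ℕ} {f : S → G} (s : S) (h : T F m k f) :
    T F m k (fun t => f (s + t)) := by
  induction m generalizing k f with
  | zero => exact fun t => h (s + t)
  | succ m ih =>
    refine ⟨fun t => h.1 (s + t), fun s' => ⟨?_, ?_⟩⟩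
    · exact T_congr (fun t => by simp only [Lmap, add_left_comm s' s t]) (ih (h.2 s').1)
    · exact T_congr (fun t => by simp only [Rmap, add_left_comm s' s t]) (ih (h.2 s').2)

/-- Lazard–Leibman: depth-truncated filtered polynomials are closed under products, and
commutators add filtration levels. -/
theorem T_mul_com (hanti : Antitone F) (hcomm : ∀ i j, ⁅F i, F j⁆ ≤ F (i + j)) (m : ℕ) :
    (∀ k (f g : S → G), T F m k f → T F m k g → T F m k (fun t => f t * g t)) ∧
    (∀ i j (a b : S → G), T F m i a → T F m j b → T F m (i + j) (fun t => ⁅a t, b t⁆)) := by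
  induction m with
  | zero =>
    constructor
    · exact fun k f g hf hg t => mul_mem (hf t) (hg t)
    · exact fun i j a b ha hb t =>
        hcomm i j (Subgroup.commutator_mem_commutator (ha t) (hb t))
  | succ m ih =>
    obtain ⟨mulm, comm⟩ := ih
    -- conjugation
    have conjm : ∀ (w : ℕ) (c q : S → G), T F m w c → T F m 0 q →
        T F m w (fun t => q t * c t * (q t)⁻¹) := by
      intro w c q hc hq
      have h1 : T F m (w + 0) (fun t => ⁅(c t)⁻¹, q t⁆) := comm w 0 _ _ (T_inv hc) hq
      have h2 := mulm w _ _ hc h1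
      exact T_congr (fun t => by simp only [commutatorElement_def]; group) h2
    -- left difference of a product
    have mulL : ∀ (k : ℕ) (f g : S → G), T F (m + 1) k f → T F (m + 1) k g → ∀ s : S,
        T F m (k + 1) (Lmap s fun t => f t * g t) := by
      intro k f g hf hg s
      have hu : T F m (k + 1) (Lmap s g) := (hg.2 s).1
      have hlf : T F m (k + 1) (Lmap s f) := (hf.2 s).1
      have hφ : T F m k (fun t => f (s + t)) := T_shift s (T_mono_depth hf)
      have hκ : T F m (k + 1 + k) (fun t => ⁅(Lmap s g t)⁻¹, f (s + t)⁆) :=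
        comm _ _ _ _ (T_inv hu) hφ
      have hκ' : T F m (k + 1) (fun t => ⁅(Lmap s g t)⁻¹, f (s + t)⁆) :=
        T_mono_level hanti (by omega) hκ
      have hprod := mulm (k + 1) _ _ (mulm (k + 1) _ _ hu hκ') hlf
      exact T_congr (fun t => by
        simp only [Lmap, commutatorElement_def]; group) hprod
    -- left difference of a commutator
    have comL : ∀ (i j : ℕ) (a b : S → G), T F (m + 1) i a → T F (m + 1) j b → ∀ s : S,
        T F m (i + j + 1) (Lmap s fun t => ⁅a t, b t⁆) := by
      intro i j a b ha hb s
      have ha0 : T F m i a := T_mono_depth ha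
      have hb0 : T F m j b := T_mono_depth hb
      have hα : T F m (i + 1) (Lmap s a) := (ha.2 s).1
      have hβ : T F m (j + 1) (Lmap s b) := (hb.2 s).1
      have hα0 : T F m 0 (Lmap s a) := T_mono_level hanti (Nat.zero_le _) hα
      have hβ0 : T F m 0 (Lmap s b) := T_mono_level hanti (Nat.zero_le _) hβ
      have hc : T F m (i + j) (fun t => ⁅a t, b t⁆) := comm _ _ _ _ ha0 hb0
      have hc0 : T F m 0 (fun t => ⁅a t, b t⁆) := T_mono_level hanti (Nat.zero_le _) hc
      -- T1 = α ⁅a, β⁆ α⁻¹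
      have h1 : T F m (i + j + 1)
          (fun t => Lmap s a t * ⁅a t, Lmap s b t⁆ * (Lmap s a t)⁻¹) :=
        conjm _ _ _ (T_mono_level hanti (by omega) (comm i (j + 1) _ _ ha0 hβ)) hα0
      -- T2 = α ⁅β, c⁆ α⁻¹
      have h2 : T F m (i + j + 1)
          (fun t => Lmap s a t * ⁅Lmap s b t, ⁅a t, b t⁆⁆ * (Lmap s a t)⁻¹) :=
        conjm _ _ _ (T_mono_level hanti (by omega) (comm (j + 1) (i + j) _ _ hβ hc)) hα0
      -- T3 = ⁅α, c⁆
      have h3 : T F m (i + j + 1) (fun t => ⁅Lmap s a t, ⁅a t, b t⁆⁆) :=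
        T_mono_level hanti (by omega) (comm (i + 1) (i + j) _ _ hα hc)
      -- T4 = c (⁅α, β⁆ * (β ⁅α, b⁆ β⁻¹)) c⁻¹
      have h4a : T F m (i + j + 1) (fun t => ⁅Lmap s a t, Lmap s b t⁆) :=
        T_mono_level hanti (by omega) (comm (i + 1) (j + 1) _ _ hα hβ)
      have h4b : T F m (i + j + 1)
          (fun t => Lmap s b t * ⁅Lmap s a t, b t⁆ * (Lmap s b t)⁻¹) :=
        conjm _ _ _ (T_mono_level hanti (by omega) (comm (i + 1) j _ _ hα hb0)) hβ0
      have h4 : T F m (i + j + 1)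
          (fun t => ⁅a t, b t⁆ *
            (⁅Lmap s a t, Lmap s b t⁆ *
              (Lmap s b t * ⁅Lmap s a t, b t⁆ * (Lmap s b t)⁻¹)) * (⁅a t, b t⁆)⁻¹) :=
        conjm _ _ _ (mulm _ _ _ h4a h4b) hc0
      have hprod := mulm (i + j + 1) _ _ (mulm (i + j + 1) _ _ (mulm (i + j + 1) _ _ h1 h2) h3) h4
      exact T_congr (fun t => by
        simp only [Lmap, commutatorElement_def]; group) hprod
    constructor
    · intro k f g hf hg
      refine ⟨fun t => mul_mem (hf.1 t) (hg.1 t), fun s => ⟨mulL k f g hf hg s, ?_⟩⟩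
      have h := T_inv (mulL k _ _ (T_inv hg) (T_inv hf) s)
      exact T_congr (fun t => by simp only [Lmap, Rmap]; group) h
    · intro i j a b ha hb
      refine ⟨fun t => hcomm i j (Subgroup.commutator_mem_commutator (ha.1 t) (hb.1 t)),
        fun s => ⟨comL i j a b ha hb s, ?_⟩⟩
      have h := T_inv (comL j i b a hb ha s)
      have h' : T F m (i + j + 1) (fun t => (Lmap s (fun t => ⁅b t, a t⁆) t)⁻¹) :=
        T_mono_level hanti (by omega) h
      exact T_congr (fun t => by
        simp only [Lmap, Rmap, commutatorElement_def]; group) h'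

theorem degLE_to_T {d : ℕ} (hTop : ∀ i, i ≤ d → F i = ⊤) :
    ∀ (m k e : ℕ) (f : S → G), DegLE e f → k + e ≤ d → T F m k f := by
  intro m
  induction m with
  | zero =>
    intro k e f _ hkd t
    rw [hTop k (by omega)]
    exact Subgroup.mem_top _
  | succ m ih =>
    intro k e f hf hkd
    refine ⟨fun t => by rw [hTop k (by omega)]; exact Subgroup.mem_top _, fun s => ?_⟩
    cases e with
    | zero =>
      constructor
      · exact T_congr (fun t => by simp only [Lmap]; rw [hf (s + t) t, mul_inv_cancel]) T_one
      · exact T_congr (fun t => by simp only [Rmap]; rw [hf (s + t) t, inv_mul_cancel]) T_one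
    | succ e =>
      exact ⟨ih (k + 1) e _ (hf s).1 (by omega), ih (k + 1) e _ (hf s).2 (by omega)⟩

/-- Iterated differences of depth exactly `q` are all trivial. -/
def Triv : ℕ → (S → G) → Prop
  | 0, f => ∀ t, f t = 1
  | q + 1, f => ∀ s : S, Triv q (Lmap s f) ∧ Triv q (Rmap s f)

theorem T_to_Triv : ∀ (q k : ℕ) (f : S → G), T F q k f → F (k + q) = ⊥ → Triv q f := by
  intro q
  induction q with
  | zero =>
    intro k f h hbot t
    have := h t
    simp only [Nat.add_zero] at hbot
    rw [hbot] at this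
    exact Subgroup.mem_bot.mp this
  | succ q ih =>
    intro k f h hbot s
    have hbot' : F (k + 1 + q) = ⊥ := by rw [show k + 1 + q = k + (q + 1) by omega]; exact hbot
    exact ⟨ih (k + 1) _ (h.2 s).1 hbot', ih (k + 1) _ (h.2 s).2 hbot'⟩

theorem Triv_to_degLE : ∀ (q : ℕ) (f : S → G), Triv (q + 1) f → DegLE q f := by
  intro q
  induction q with
  | zero =>
    intro f h t t'
    have h1 : f (t' + t) = f t := by
      have := (h t').1 t
      simp only [Lmap] at this
      exact mul_inv_eq_one.mp this
    have h2 : f (t + t') = f t' := by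
      have := (h t).1 t'
      simp only [Lmap] at this
      exact mul_inv_eq_one.mp this
    rw [← h1, add_comm t' t, h2]
  | succ q ih =>
    intro f h s
    exact ⟨ih _ (h s).1, ih _ (h s).2⟩

theorem DegLE_mono_succ {e : ℕ} {f : S → G} (h : DegLE e f) : DegLE (e + 1) f := by
  induction e generalizing f with
  | zero =>
    intro s
    constructor
    · intro t t'
      show f (s + t) * (f t)⁻¹ = f (s + t') * (f t')⁻¹
      rw [h (s + t) t, h (s + t') t', mul_inv_cancel, mul_inv_cancel]
    · intro t t'
      show (f t)⁻¹ * f (s + t) = (f t')⁻¹ * f (s + t')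
      rw [h (s + t) t, h (s + t') t', inv_mul_cancel, inv_mul_cancel]
  | succ e ih =>
    intro s
    exact ⟨ih (h s).1, ih (h s).2⟩

theorem DegLE_mono {e e' : ℕ} {f : S → G} (hee : e ≤ e') (h : DegLE e f) : DegLE e' f := by
  induction e' with
  | zero => rwa [Nat.le_zero.mp hee] at h
  | succ e' ih =>
    rcases Nat.lt_or_ge e (e' + 1) with hlt | hge
    · exact DegLE_mono_succ (ih (by omega))
    · rwa [le_antisymm hee hge] at h

theorem DegLE_inv {e : ℕ} {f : S → G} (h : DegLE e f) : DegLE e (fun t => (f t)⁻¹) := by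
  induction e generalizing f with
  | zero => exact fun t t' => by show (f t)⁻¹ = (f t')⁻¹; rw [h t t']
  | succ e ih =>
    intro s
    constructor
    · have := ih (h s).2
      have e1 : (fun t => ((f t)⁻¹ * f (s + t))⁻¹) =
          (fun t => (fun u => (f u)⁻¹) (s + t) * ((fun u => (f u)⁻¹) t)⁻¹) := by
        funext t; group
      rwa [e1] at this
    · have := ih (h s).1
      have e1 : (fun t => (f (s + t) * (f t)⁻¹)⁻¹) =
          (fun t => ((fun u => (f u)⁻¹) t)⁻¹ * (fun u => (f u)⁻¹) (s + t)) := by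
        funext t; group
      rwa [e1] at this

theorem isPoly_mul [Group.IsNilpotent G] {f g : S → G} (hf : IsPoly f) (hg : IsPoly g) :
    IsPoly (fun t => f t * g t) := by
  obtain ⟨d₁, hf⟩ := hf
  obtain ⟨d₂, hg⟩ := hg
  set d := d₁ + d₂ + 1 with hd_def
  have hd : 0 < d := by omega
  have hf' : DegLE d f := DegLE_mono (by omega) hf
  have hg' : DegLE d g := DegLE_mono (by omega) hg
  set c := Group.nilpotencyClass G with hc_def
  set F : ℕ → Subgroup G := fun i => Subgroup.lowerCentralSeries (⊤ : Subgroup G) ((i - 1) / d) with hF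
  have hanti : Antitone F := fun i j hij =>
    lowerCentralSeries_antitone _ (Nat.div_le_div_right (Nat.sub_le_sub_right hij 1))
  have hcomm : ∀ i j, ⁅F i, F j⁆ ≤ F (i + j) := by
    intro i j
    refine le_trans (lcs_comm_le _ _) (lowerCentralSeries_antitone _ ?_)
    -- (i + j - 1) / d ≤ (i - 1) / d + (j - 1) / d + 1
    have hA : i - 1 < d * ((i - 1) / d + 1) := Nat.lt_mul_div_succ _ hd
    have hB : j - 1 < d * ((j - 1) / d + 1) := Nat.lt_mul_div_succ _ hd
    rw [Nat.div_le_iff_le_mul_add_pred hd]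
    have expand : d * ((i - 1) / d + (j - 1) / d + 1) + (d - 1) + 1 =
        d * ((i - 1) / d + 1) + d * ((j - 1) / d + 1) := by ring_nf; omega
    omega
  have hTop : ∀ i, i ≤ d → F i = ⊤ := by
    intro i hi
    have : (i - 1) / d = 0 := Nat.div_eq_of_lt (by omega)
    rw [hF]
    simp only [this]
    exact lowerCentralSeries_zero _
  have hbot : F (0 + (c * d + 1)) = ⊥ := by
    rw [hF]
    simp only [zero_add, Nat.add_sub_cancel, Nat.mul_div_cancel c hd]
    exact hc_def ▸ lowerCentralSeries_nilpotencyClass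
  have hTf : ∀ m, T F m 0 f := fun m => degLE_to_T hTop m 0 d f hf' (by omega)
  have hTg : ∀ m, T F m 0 g := fun m => degLE_to_T hTop m 0 d g hg' (by omega)
  have hTfg : T F (c * d + 1) 0 (fun t => f t * g t) :=
    (T_mul_com hanti hcomm (c * d + 1)).1 0 f g (hTf _) (hTg _)
  exact ⟨c * d, Triv_to_degLE _ _ (T_to_Triv _ 0 _ hTfg hbot)⟩

theorem isPoly_one : IsPoly (fun _ : S => (1 : G)) := ⟨0, fun _ _ => rfl⟩

theorem isPoly_inv {f : S → G} (hf : IsPoly f) : IsPoly (fun t => (f t)⁻¹) := by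
  obtain ⟨d, hf⟩ := hf
  exact ⟨d, DegLE_inv hf⟩

end Aux

/-- Let `S` be a nonempty additive commutative semigroup and `G` a nilpotent group of
nilpotency class `n`. Then the set of all polynomial maps `S → G` is a subgroup of the
group of all maps `S → G` with pointwise multiplication, and this group of polynomial
maps is nilpotent of nilpotency class exactly `n`. -/
theorem group_of_polynomial_maps {S : Type*} [AddCommSemigroup S] [Nonempty S]
    {G : Type*} [Group G] [Group.IsNilpotent G] (n : ℕ)
    (hn : Group.nilpotencyClass G = n) :
    ∃ H : Subgroup (S → G), ((H : Set (S → G)) = {f : S → G | IsPoly f}) ∧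
      ∃ hnil : Group.IsNilpotent ↥H, @Group.nilpotencyClass ↥H _ = n := by
  set H : Subgroup (S → G) :=
    { carrier := {f : S → G | IsPoly f}
      mul_mem' := fun hf hg => isPoly_mul hf hg
      one_mem' := isPoly_one
      inv_mem' := fun hf => isPoly_inv hf } with hH
  have hlcs : Subgroup.lowerCentralSeries (⊤ : Subgroup G) n = ⊥ := by
    rw [← hn]; exact lowerCentralSeries_nilpotencyClass
  -- the full function group is nilpotent of class ≤ n
  haveI hpi_nil : Group.IsNilpotent (S → G) := by
    rw [nilpotent_iff_lowerCentralSeries]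
    refine ⟨n, ?_⟩
    rw [eq_bot_iff]
    refine le_trans (Subgroup.top_lowerCentralSeries_pi_le _) ?_
    rw [← eq_bot_iff, Subgroup.pi_eq_bot_iff]
    exact fun _ => hlcs
  have hpi_le : Group.nilpotencyClass (S → G) ≤ n := by
    rw [← lowerCentralSeries_eq_bot_iff_nilpotencyClass_le, eq_bot_iff]
    refine le_trans (Subgroup.top_lowerCentralSeries_pi_le _) ?_
    rw [← eq_bot_iff, Subgroup.pi_eq_bot_iff]
    exact fun _ => hlcs
  letI : Group.IsNilpotent (S → G) := hpi_nil
  haveI hHnil : Group.IsNilpotent ↥H := Subgroup.isNilpotent H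
  refine ⟨H, rfl, hHnil, le_antisymm (le_trans (Subgroup.nilpotencyClass_le H) hpi_le) ?_⟩
  -- lower bound: G embeds into H via constant maps
  have hconst : ∀ x : G, IsPoly (fun _ : S => x) := fun x => ⟨0, fun _ _ => rfl⟩
  set φ : G →* ↥H :=
    { toFun := fun x => ⟨fun _ => x, hconst x⟩
      map_one' := rfl
      map_mul' := fun x y => rfl }
  have hφinj : Function.Injective φ := by
    intro x y hxy
    have := congrArg (fun u : ↥H => (u : S → G) (Classical.arbitrary S)) hxy
    exact this
  haveI : Group.IsNilpotent ↥φ.range := by infer_instance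
  have h1 : Group.nilpotencyClass G = Group.nilpotencyClass ↥φ.range := by
    have e := MonoidHom.ofInjective hφinj
    exact le_antisymm
      (_root_.nilpotencyClass_le_of_surjective e.symm.toMonoidHom e.symm.surjective)
      (_root_.nilpotencyClass_le_of_surjective e.toMonoidHom e.surjective)
  calc n = Group.nilpotencyClass G := hn.symm
    _ = Group.nilpotencyClass ↥φ.range := h1
    _ ≤ Group.nilpotencyClass ↥H := Subgroup.nilpotencyClass_le φ.range

end PaperPoly
end

section
/- Let S be an additive commutative monoid generated by a subset S₀, G a group, and d ∈ ℕ. If f, g : S → G are polynomial maps of degree ≤ d which agree on the set {0} ∪ S₀^{≤ d}, where S₀^{≤ d} = { s₁ + s₂ + ⋯ + s_i : 1 ≤ i ≤ d, s₁,…,s_i ∈ S₀ }, then f = g on all of S. -/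
namespace PaperPoly

private lemma key {S : Type*} [AddCommMonoid S] {G : Type*} [Group G] (S₀ : Set S)
    (hgen : AddSubmonoid.closure S₀ = ⊤) :
    ∀ d : ℕ, ∀ f g : S → G, DegLE d f → DegLE d g → f 0 = g 0 →
      (∀ s : S, (∃ l : List S, l ≠ [] ∧ l.length ≤ d ∧ (∀ x ∈ l, x ∈ S₀) ∧ l.sum = s) →
        f s = g s) → ∀ s : S, f s = g s := by
  intro d
  induction d with
  | zero =>
    intro f g hf hg h0 _ s
    calc f s = f 0 := hf s 0
      _ = g 0 := h0
      _ = g s := hg 0 s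
  | succ d ih =>
    intro f g hf hg h0 hS₀ s
    have hmem : ∀ s0 ∈ S₀, f s0 = g s0 := by
      intro s0 hs0
      exact hS₀ s0 ⟨[s0], by simp, by simp, by simp [hs0], by simp⟩
    have hL : ∀ s0 ∈ S₀, ∀ t : S, f (s0 + t) * (f t)⁻¹ = g (s0 + t) * (g t)⁻¹ := by
      intro s0 hs0
      refine ih _ _ ((hf s0).1) ((hg s0).1) ?_ ?_
      · simp only [add_zero]
        rw [hmem s0 hs0, h0]
      · rintro t ⟨l, hne, hlen, hl, rfl⟩
        have h1 : f l.sum = g l.sum :=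
          hS₀ _ ⟨l, hne, hlen.trans (Nat.le_succ d), hl, rfl⟩
        have h2 : f (s0 + l.sum) = g (s0 + l.sum) := by
          refine hS₀ _ ⟨s0 :: l, by simp, ?_, ?_, by simp⟩
          · simpa using hlen
          · intro x hx
            rcases List.mem_cons.1 hx with rfl | hx
            · exact hs0
            · exact hl x hx
        simp only [h1, h2]
    have hlist : ∀ l : List S, (∀ x ∈ l, x ∈ S₀) → f l.sum = g l.sum := by
      intro l
      induction l with
      | nil => intro _; simpa using h0
      | cons a l ihl =>
        intro hl
        have ha : a ∈ S₀ := hl a (by simp)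
        have h1 : f l.sum = g l.sum := ihl fun x hx => hl x (by simp [hx])
        have h' := hL a ha l.sum
        have : f (a + l.sum) = g (a + l.sum) := by
          calc f (a + l.sum) = (f (a + l.sum) * (f l.sum)⁻¹) * f l.sum := by group
            _ = (g (a + l.sum) * (g l.sum)⁻¹) * g l.sum := by rw [h', h1]
            _ = g (a + l.sum) := by group
        simpa using this
    have hs : s ∈ AddSubmonoid.closure S₀ := by rw [hgen]; trivial
    obtain ⟨l, hl, rfl⟩ := AddSubmonoid.exists_list_of_mem_closure hs
    exact hlist l hl

/-- Let `S` be an additive commutative monoid generated by a subset `S₀`, `G` a group and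
`d ∈ ℕ`. If two polynomial maps `f, g : S → G` of degree `≤ d` agree at `0` and on the
set `S₀^{≤ d}` of sums `s₁ + ⋯ + sᵢ` of `1 ≤ i ≤ d` elements of `S₀`, then `f = g`
on all of `S`. -/
theorem polynomial_map_uniquely_determined {S : Type*} [AddCommMonoid S] {G : Type*}
    [Group G] (S₀ : Set S) (hgen : AddSubmonoid.closure S₀ = ⊤) (d : ℕ) (f g : S → G)
    (hf : DegLE d f) (hg : DegLE d g) (h0 : f 0 = g 0)
    (hS₀ : ∀ s : S,
      (∃ l : List S, l ≠ [] ∧ l.length ≤ d ∧ (∀ x ∈ l, x ∈ S₀) ∧ l.sum = s) →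
      f s = g s) :
    ∀ s : S, f s = g s := by
  exact key S₀ hgen d f g hf hg h0 hS₀

end PaperPoly
end

section
/- Let S be a finitely generated additive commutative semigroup, G a locally nilpotent group, and g : S → G a polynomial map. Then the subgroup of G generated by g(S) is finitely generated and nilpotent. -/
namespace PaperPoly

open Classical in
/-- Key lemma: if `f` has degree `≤ d` then there is a finite set `F` inside the closure of
the range of `f` such that the range of `f` is contained in the closure of `F`. -/
lemma key_s8 {S : Type*} [AddCommSemigroup S] [Nonempty S] {G : Type*} [Group G]
    (T : Finset S) (hT : AddSubsemigroup.closure (T : Set S) = ⊤) :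
    ∀ d : ℕ, ∀ f : S → G, DegLE d f →
      ∃ F : Finset G, (F : Set G) ⊆ ↑(Subgroup.closure (Set.range f)) ∧
        Set.range f ⊆ ↑(Subgroup.closure (F : Set G)) := by
  intro d
  induction d with
  | zero =>
    intro f hf
    obtain ⟨t₀⟩ := ‹Nonempty S›
    refine ⟨{f t₀}, ?_, ?_⟩
    · intro x hx
      simp only [Finset.coe_singleton, Set.mem_singleton_iff] at hx
      subst hx
      exact Subgroup.subset_closure ⟨t₀, rfl⟩
    · rintro x ⟨t, rfl⟩
      have : f t = f t₀ := hf t t₀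
      rw [this]
      exact Subgroup.subset_closure (by simp)
  | succ d ih =>
    intro f hf
    obtain ⟨t₀⟩ := ‹Nonempty S›
    -- for each s ∈ T, choose a finite set for the left difference map
    have hch : ∀ s : S, ∃ F : Finset G,
        (F : Set G) ⊆ ↑(Subgroup.closure (Set.range (fun t => f (s + t) * (f t)⁻¹))) ∧
        Set.range (fun t => f (s + t) * (f t)⁻¹) ⊆ ↑(Subgroup.closure (F : Set G)) := by
      intro s
      exact ih _ (hf s).1
    choose Fs hFs1 hFs2 using hch
    refine ⟨insert (f t₀) (T.biUnion fun s => Fs s), ?_, ?_⟩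
    · -- the finite set lies in the closure of the range of f
      intro x hx
      simp only [Finset.coe_insert, Set.mem_insert_iff, Finset.coe_biUnion,
        Finset.mem_coe, Set.mem_iUnion] at hx
      rcases hx with rfl | ⟨s, _, hx⟩
      · exact Subgroup.subset_closure ⟨t₀, rfl⟩
      · have h1 : Subgroup.closure (Set.range (fun t => f (s + t) * (f t)⁻¹))
            ≤ Subgroup.closure (Set.range f) := by
          apply Subgroup.closure_le _ |>.mpr
          rintro y ⟨t, rfl⟩
          exact mul_mem (Subgroup.subset_closure ⟨s + t, rfl⟩)
            (inv_mem (Subgroup.subset_closure ⟨t, rfl⟩))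
        exact h1 (hFs1 s hx)
    · -- the range of f lies in the closure of the finite set
      set F : Finset G := insert (f t₀) (T.biUnion fun s => Fs s) with hF
      set K : Subgroup G := Subgroup.closure (F : Set G) with hK
      have hFsK : ∀ s ∈ T, Subgroup.closure (↑(Fs s) : Set G) ≤ K := by
        intro s hs
        apply Subgroup.closure_le _ |>.mpr
        intro x hx
        apply Subgroup.subset_closure
        simp only [hF, Finset.coe_insert, Set.mem_insert_iff, Finset.coe_biUnion,
          Finset.mem_coe, Set.mem_iUnion]
        exact Or.inr ⟨s, hs, hx⟩
      -- the set of a such that all left differences at a lie in K is a subsemigroup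
      let V : AddSubsemigroup S :=
        { carrier := {a : S | ∀ t : S, f (a + t) * (f t)⁻¹ ∈ K}
          add_mem' := by
            intro a b ha hb t
            have h1 : f (a + (b + t)) * (f (b + t))⁻¹ ∈ K := ha (b + t)
            have h2 : f (b + t) * (f t)⁻¹ ∈ K := hb t
            have : f (a + b + t) * (f t)⁻¹ =
                (f (a + (b + t)) * (f (b + t))⁻¹) * (f (b + t) * (f t)⁻¹) := by
              rw [add_assoc]; group
            rw [this]
            exact mul_mem h1 h2 }
      have hTV : (T : Set S) ⊆ V := by
        intro s hs t
        exact hFsK s hs (hFs2 s ⟨t, rfl⟩)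
      have hVtop : ∀ a : S, a ∈ V := by
        intro a
        have : AddSubsemigroup.closure (T : Set S) ≤ V := AddSubsemigroup.closure_le.mpr hTV
        rw [hT] at this
        exact this trivial
      rintro x ⟨t, rfl⟩
      have h1 : f (t₀ + t) * (f t)⁻¹ ∈ K := hVtop t₀ t
      have h2 : f (t + t₀) * (f t₀)⁻¹ ∈ K := hVtop t t₀
      have ht₀ : f t₀ ∈ K := Subgroup.subset_closure (by simp [hF])
      have h3 : f (t + t₀) ∈ K := by
        have := mul_mem h2 ht₀
        simpa using this
      rw [add_comm t t₀] at h3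
      have : f t = (f (t₀ + t) * (f t)⁻¹)⁻¹ * f (t₀ + t) := by group
      rw [this]
      exact mul_mem (inv_mem h1) h3

/-- If `g : S → G` is a polynomial map from a finitely generated additive commutative
semigroup `S` to a locally nilpotent group `G` (every finitely generated subgroup of `G`
is nilpotent), then the subgroup of `G` generated by the image `g(S)` is finitely
generated and nilpotent. -/
theorem polynomial_map_into_locally_nilpotent {S : Type*} [AddCommSemigroup S] [Nonempty S]
    {G : Type*} [Group G]
    (hS : ∃ T : Finset S, AddSubsemigroup.closure (T : Set S) = ⊤)
    (hG : ∀ K : Subgroup G, K.FG → Group.IsNilpotent ↥K)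
    (g : S → G) (hg : IsPoly g) :
    (Subgroup.closure (Set.range g)).FG ∧
      Group.IsNilpotent ↥(Subgroup.closure (Set.range g)) := by
  obtain ⟨T, hT⟩ := hS
  obtain ⟨d, hd⟩ := hg
  obtain ⟨F, hF1, hF2⟩ := key_s8 T hT d g hd
  have heq : Subgroup.closure (Set.range g) = Subgroup.closure (F : Set G) := by
    apply le_antisymm
    · exact Subgroup.closure_le _ |>.mpr hF2
    · exact Subgroup.closure_le _ |>.mpr hF1
  have hFG : (Subgroup.closure (Set.range g)).FG := ⟨F, heq.symm⟩
  exact ⟨hFG, hG _ hFG⟩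

end PaperPoly
end

section
/- Let 𝒰_n(ℝ) denote the group of upper unitriangular n×n real matrices, and let f : ℝ_{≥0} → 𝒰_n(ℝ) be a map with entries f_{i,j} : ℝ_{≥0} → ℝ for 1 ≤ i < j ≤ n (diagonal entries 1, entries below the diagonal 0). Then f is a continuous polynomial map (from the additive semigroup ℝ_{≥0} to the group 𝒰_n(ℝ)) if and only if every entry f_{i,j}, 1 ≤ i < j ≤ n, is a real polynomial function of t. -/
namespace PaperPoly

open Matrix

/-- The group `𝒰 n (ℝ)` of upper unitriangular `n × n` real matrices, as a subgroup of the
units of the matrix ring: invertible matrices with `1`'s on the diagonal and `0`'s below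
the diagonal. -/
def UpperUnitriangular (n : ℕ) : Subgroup (Matrix (Fin n) (Fin n) ℝ)ˣ where
  carrier := {A | ∀ i j : Fin n, j ≤ i →
    (A : Matrix (Fin n) (Fin n) ℝ) i j = if i = j then 1 else 0}
  one_mem' := by
    intro i j hji
    simp [Matrix.one_apply, eq_comm]
  mul_mem' := by
    intro A B hA hB i j hji
    rw [Units.val_mul, Matrix.mul_apply, Finset.sum_eq_single i]
    · have h1 : (A : Matrix (Fin n) (Fin n) ℝ) i i = 1 := by simpa using hA i i le_rfl
      rw [h1, one_mul, hB i j hji]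
    · intro b _ hbi
      rcases le_or_gt b i with hb | hb
      · have hzero : (A : Matrix (Fin n) (Fin n) ℝ) i b = 0 := by
          have := hA i b hb
          rwa [if_neg (fun h => hbi h.symm)] at this
        rw [hzero, zero_mul]
      · have hzero : (B : Matrix (Fin n) (Fin n) ℝ) b j = 0 := by
          have hjb : j ≤ b := le_of_lt (lt_of_le_of_lt hji hb)
          have := hB b j hjb
          rwa [if_neg (lt_of_le_of_lt hji hb).ne'] at this
        rw [hzero, mul_zero]
    · intro h
      exact absurd (Finset.mem_univ i) h
  inv_mem' := by
    intro A hA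
    -- the underlying matrix is block triangular (upper triangular)
    have hbt : (A : Matrix (Fin n) (Fin n) ℝ).BlockTriangular id := by
      intro i j hij
      have := hA i j (le_of_lt hij)
      have hne : i ≠ j := by
        intro h
        rw [h] at hij
        exact lt_irrefl _ hij
      rwa [if_neg hne] at this
    haveI : Invertible (A : Matrix (Fin n) (Fin n) ℝ) := A.invertible
    have hbtinv : ((A : Matrix (Fin n) (Fin n) ℝ)⁻¹).BlockTriangular id :=
      blockTriangular_inv_of_blockTriangular hbt
    have hcoe : ((A⁻¹ : (Matrix (Fin n) (Fin n) ℝ)ˣ) : Matrix (Fin n) (Fin n) ℝ)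
        = (A : Matrix (Fin n) (Fin n) ℝ)⁻¹ := Matrix.coe_units_inv A
    intro i j hji
    rcases eq_or_lt_of_le hji with rfl | hlt
    · rw [if_pos rfl, hcoe]
      -- diagonal entry of the inverse is 1
      have hmul : (A : Matrix (Fin n) (Fin n) ℝ) * (A : Matrix (Fin n) (Fin n) ℝ)⁻¹ = 1 :=
        Matrix.mul_inv_of_invertible _
      have := congrArg (fun M => M j j) hmul
      simp only [Matrix.mul_apply, Matrix.one_apply_eq] at this
      rw [Finset.sum_eq_single j] at this
      · have h1 : (A : Matrix (Fin n) (Fin n) ℝ) j j = 1 := by simpa using hA j j le_rfl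
        rwa [h1, one_mul] at this
      · intro b _ hbj
        rcases le_or_gt b j with hb | hb
        · have hzero : (A : Matrix (Fin n) (Fin n) ℝ) j b = 0 := by
            have := hA j b hb
            rwa [if_neg (fun h => hbj h.symm)] at this
          rw [hzero, zero_mul]
        · have hzero : (A : Matrix (Fin n) (Fin n) ℝ)⁻¹ b j = 0 := hbtinv hb
          rw [hzero, mul_zero]
      · intro h
        exact absurd (Finset.mem_univ j) h
    · rw [if_neg hlt.ne', hcoe]
      exact hbtinv hlt

open Polynomial

section Scalar

lemma hasseDeriv_natDegree_eq_C (p : ℝ[X]) :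
    hasseDeriv p.natDegree p = C (p.coeff p.natDegree) := by
  ext n
  rw [hasseDeriv_coeff]
  rcases Nat.eq_zero_or_pos n with rfl | hn
  · simp
  · rw [coeff_eq_zero_of_natDegree_lt (by omega), coeff_C, if_neg (by omega)]
    ring

lemma taylor_sub_coeff (s : ℝ) (p : ℝ[X]) {d m : ℕ} (hp : p.natDegree ≤ d) (hm : d ≤ m) :
    (taylor s p - p).coeff m = 0 := by
  rcases lt_or_eq_of_le (le_trans hp hm : p.natDegree ≤ m) with h | h
  · rw [coeff_sub, coeff_eq_zero_of_natDegree_lt (by rwa [natDegree_taylor]),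
      coeff_eq_zero_of_natDegree_lt h, sub_zero]
  · rw [coeff_sub, ← h, taylor_coeff, hasseDeriv_natDegree_eq_C, eval_C]
    exact sub_self _

lemma taylor_sub_natDegree (s : ℝ) (p : ℝ[X]) {d : ℕ} (hp : p.natDegree ≤ d) :
    (taylor s p - p).natDegree ≤ d - 1 ∧ (d = 0 → taylor s p - p = 0) := by
  constructor
  · rw [natDegree_le_iff_coeff_eq_zero]
    intro N hN
    exact taylor_sub_coeff s p hp (by omega)
  · intro hd
    ext m
    rw [taylor_sub_coeff s p hp (by omega), coeff_zero]

lemma exists_sum_poly : ∀ (d : ℕ) (q : ℝ[X]), q.natDegree ≤ d →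
    ∃ Q : ℝ[X], ∀ m : ℕ, Q.eval (m : ℝ) = ∑ j ∈ Finset.range m, q.eval (j : ℝ) := by
  intro d
  induction d with
  | zero =>
    intro q hq
    refine ⟨C (q.coeff 0) * X, fun m => ?_⟩
    rw [eq_C_of_natDegree_le_zero hq]
    simp only [coeff_C_zero, eval_mul, eval_C, eval_X, Finset.sum_const, Finset.card_range,
      nsmul_eq_mul]
    ring
  | succ d ih =>
    intro q hq
    by_cases h : q.natDegree ≤ d
    · exact ih q h
    · have hd : q.natDegree = d + 1 := le_antisymm hq (by omega)
      have hq0 : q ≠ 0 := fun h0 => by simp [h0] at hd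
      set a : ℝ := q.leadingCoeff / (d + 2) with ha
      have had : ((d : ℝ) + 2) ≠ 0 := by positivity
      have haa : a * ((d : ℝ) + 2) = q.leadingCoeff := div_mul_cancel₀ _ had
      set R : ℝ[X] := C a * X ^ (d + 2) with hR
      have hRdeg : R.natDegree ≤ d + 2 := by
        rcases eq_or_ne a 0 with h0 | h0
        · simp [hR, h0]
        · rw [hR, natDegree_C_mul_X_pow _ _ h0]
      set D : ℝ[X] := taylor 1 R - R with hD
      have hDcoeff : D.coeff (d + 1) = q.leadingCoeff := by
        have ht : taylor (1:ℝ) R = C a * (X + 1) ^ (d + 2) := by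
          rw [taylor_apply, hR, mul_comp, C_comp, X_pow_comp, C_1]
        rw [hD, coeff_sub, ht, coeff_C_mul, coeff_X_add_one_pow, hR, coeff_C_mul,
          coeff_X_pow, if_neg (by omega)]
        have : ((d + 2).choose (d + 1) : ℝ) = (d : ℝ) + 2 := by
          rw [Nat.choose_succ_self_right]
          push_cast; ring
        rw [this, mul_zero, sub_zero, haa]
      have hDhigh : ∀ m, d + 2 ≤ m → D.coeff m = 0 := fun m hm =>
        taylor_sub_coeff 1 R hRdeg hm
      have hq' : (q - D).natDegree ≤ d := by
        rw [natDegree_le_iff_coeff_eq_zero]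
        intro N hN
        rcases eq_or_lt_of_le (by omega : d + 1 ≤ N) with h1 | h1
        · rw [coeff_sub, ← h1, hDcoeff, ← hd, coeff_natDegree, sub_self]
        · rw [coeff_sub, coeff_eq_zero_of_natDegree_lt (by omega), hDhigh N (by omega),
            sub_zero]
      obtain ⟨Q', hQ'⟩ := ih (q - D) hq'
      refine ⟨Q' + R - C (R.eval 0), fun m => ?_⟩
      have hDeval : ∀ x : ℝ, D.eval x = R.eval (x + 1) - R.eval x := by
        intro x
        rw [hD, eval_sub, taylor_eval]
      have htel : R.eval ((m : ℕ) : ℝ) - R.eval ((0 : ℕ) : ℝ) =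
          ∑ j ∈ Finset.range m, (R.eval (((j + 1 : ℕ)) : ℝ) - R.eval ((j : ℕ) : ℝ)) := by
        rw [Finset.sum_range_sub (fun j => R.eval ((j : ℕ) : ℝ)) m]
      rw [eval_sub, eval_add, eval_C, hQ']
      rw [add_sub_assoc, show R.eval (0:ℝ) = R.eval ((0:ℕ):ℝ) by norm_num, htel,
        ← Finset.sum_add_distrib]
      apply Finset.sum_congr rfl
      intro j _
      have h1 := hDeval ((j : ℕ) : ℝ)
      have h2 : (((j + 1 : ℕ)) : ℝ) = ((j : ℕ) : ℝ) + 1 := by push_cast; ring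
      rw [h2]
      rw [eval_sub]
      linarith [h1]

/-- `h : ℝ≥0 → ℝ` agrees with a polynomial of degree at most `m`. -/
def PolyDeg (m : ℕ) (h : NNReal → ℝ) : Prop :=
  ∃ p : ℝ[X], p.natDegree ≤ m ∧ ∀ t : NNReal, h t = p.eval (t : ℝ)

lemma PolyDeg.mono {m m' : ℕ} {h : NNReal → ℝ} (H : PolyDeg m h) (hm : m ≤ m') :
    PolyDeg m' h := by
  obtain ⟨p, hp, he⟩ := H; exact ⟨p, le_trans hp hm, he⟩

lemma PolyDeg.congr {m : ℕ} {h g : NNReal → ℝ} (H : PolyDeg m h) (e : ∀ t, h t = g t) :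
    PolyDeg m g := by
  obtain ⟨p, hp, he⟩ := H; exact ⟨p, hp, fun t => (e t) ▸ he t⟩

lemma PolyDeg_const (m : ℕ) (c : ℝ) : PolyDeg m (fun _ => c) :=
  ⟨C c, by simp, by simp⟩

lemma PolyDeg.add {m : ℕ} {h g : NNReal → ℝ} (H : PolyDeg m h) (G : PolyDeg m g) :
    PolyDeg m (fun t => h t + g t) := by
  obtain ⟨p, hp, he⟩ := H; obtain ⟨q, hq, ge⟩ := G
  exact ⟨p + q, le_trans (natDegree_add_le p q) (max_le hp hq),
    fun t => by show h t + g t = _; rw [he t, ge t, eval_add]⟩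

lemma PolyDeg.neg {m : ℕ} {h : NNReal → ℝ} (H : PolyDeg m h) :
    PolyDeg m (fun t => -(h t)) := by
  obtain ⟨p, hp, he⟩ := H
  exact ⟨-p, by simpa using hp, fun t => by show -(h t) = _; rw [he t, eval_neg]⟩

lemma PolyDeg.sub {m : ℕ} {h g : NNReal → ℝ} (H : PolyDeg m h) (G : PolyDeg m g) :
    PolyDeg m (fun t => h t - g t) := by
  have := H.add G.neg
  exact this.congr (fun t => by ring)

lemma PolyDeg.mul {a b : ℕ} {h g : NNReal → ℝ} (H : PolyDeg a h) (G : PolyDeg b g) :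
    PolyDeg (a + b) (fun t => h t * g t) := by
  obtain ⟨p, hp, he⟩ := H; obtain ⟨q, hq, ge⟩ := G
  exact ⟨p * q, le_trans natDegree_mul_le (by omega),
    fun t => by show h t * g t = _; rw [he t, ge t, eval_mul]⟩

lemma PolyDeg.sum {m : ℕ} {ι : Type*} (s : Finset ι) (F : ι → NNReal → ℝ)
    (H : ∀ k ∈ s, PolyDeg m (F k)) : PolyDeg m (fun t => ∑ k ∈ s, F k t) := by
  classical
  induction s using Finset.induction_on with
  | empty => exact (PolyDeg_const m 0).congr (by simp)
  | @insert k s hk ih =>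
    have := (H k (Finset.mem_insert_self k s)).add
      (ih (fun k' hk' => H k' (Finset.mem_insert_of_mem hk')))
    exact this.congr (fun t => by rw [Finset.sum_insert hk])

lemma PolyDeg.shift {m : ℕ} {h : NNReal → ℝ} (H : PolyDeg m h) (s : NNReal) :
    PolyDeg m (fun t => h (s + t)) := by
  obtain ⟨p, hp, he⟩ := H
  refine ⟨taylor (s : ℝ) p, by rwa [natDegree_taylor], fun t => ?_⟩
  show h (s + t) = _
  rw [he (s + t), taylor_eval, show (((s + t) : NNReal) : ℝ) = (t : ℝ) + s by push_cast; ring]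

/-- difference of a shifted polynomial function: degree drops. -/
lemma PolyDeg.diff {m : ℕ} {h : NNReal → ℝ} (H : PolyDeg m h) (s : NNReal) :
    ∃ p : ℝ[X], p.natDegree ≤ m - 1 ∧ (m = 0 → p = 0) ∧
      ∀ t : NNReal, h (s + t) - h t = p.eval (t : ℝ) := by
  obtain ⟨p, hp, he⟩ := H
  obtain ⟨h1, h2⟩ := taylor_sub_natDegree (s : ℝ) p hp
  refine ⟨taylor (s : ℝ) p - p, h1, h2, fun t => ?_⟩
  rw [eval_sub, taylor_eval, he (s + t), he t,
    show (((s + t) : NNReal) : ℝ) = (t : ℝ) + s by push_cast; ring]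




/-- additive polynomial maps `ℝ≥0 → ℝ` of degree at most `d` (finite differences). -/
def ADeg : ℕ → (NNReal → ℝ) → Prop
  | 0 => fun h => ∀ t t' : NNReal, h t = h t'
  | d + 1 => fun h => ∀ s : NNReal, ADeg d (fun t => h (s + t) - h t)

lemma ADeg.congr : ∀ {d : ℕ} {h g : NNReal → ℝ}, ADeg d h → (∀ t, h t = g t) → ADeg d g := by
  intro d
  induction d with
  | zero => intro h g H e t t'; rw [← e t, ← e t']; exact H t t'
  | succ d ih =>
    intro h g H e s
    exact ih (H s) (fun t => by rw [e (s + t), e t])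

lemma ADeg_const : ∀ (d : ℕ) (c : ℝ), ADeg d (fun _ => c) := by
  intro d
  induction d with
  | zero => intro c t t'; rfl
  | succ d ih =>
    intro c s
    exact (ih 0).congr (fun t => by show (0 : ℝ) = c - c; ring)

lemma ADeg.succ : ∀ {d : ℕ} {h : NNReal → ℝ}, ADeg d h → ADeg (d + 1) h := by
  intro d
  induction d with
  | zero =>
    intro h H s t t'
    show h (s + t) - h t = h (s + t') - h t'
    rw [H (s + t) (s + t'), H t t']
  | succ d ih => intro h H s; exact ih (H s)

lemma ADeg.mono {d d' : ℕ} {h : NNReal → ℝ} (H : ADeg d h) (hd : d ≤ d') : ADeg d' h := by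
  induction hd with
  | refl => exact H
  | step _ ih => exact ih.succ

lemma ADeg.add : ∀ {d : ℕ} {h g : NNReal → ℝ}, ADeg d h → ADeg d g →
    ADeg d (fun t => h t + g t) := by
  intro d
  induction d with
  | zero =>
    intro h g H G t t'
    show h t + g t = h t' + g t'
    rw [H t t', G t t']
  | succ d ih => intro h g H G s; exact (ih (H s) (G s)).congr (fun t => by ring)

lemma ADeg.shift : ∀ {d : ℕ} {h : NNReal → ℝ}, ADeg d h → ∀ u : NNReal,
    ADeg d (fun t => h (u + t)) := by
  intro d
  induction d with
  | zero => intro h H u t t'; exact H _ _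
  | succ d ih =>
    intro h H u s
    exact (ih (H s) u).congr (fun t => by rw [add_left_comm])

lemma ADeg.const_mul : ∀ {d : ℕ} {g : NNReal → ℝ} (c : ℝ), ADeg d g →
    ADeg d (fun t => c * g t) := by
  intro d
  induction d with
  | zero =>
    intro g c G t t'
    show c * g t = c * g t'
    rw [G t t']
  | succ d ih => intro g c G s; exact (ih c (G s)).congr (fun t => by ring)

lemma ADeg.mul_aux : ∀ (N a b : ℕ) (h g : NNReal → ℝ), a + b ≤ N → ADeg a h → ADeg b g →
    ADeg (a + b) (fun t => h t * g t) := by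
  intro N
  induction N with
  | zero =>
    intro a b h g hab H G
    have ha : a = 0 := by omega
    have hb : b = 0 := by omega
    subst ha; subst hb
    intro t t'
    show h t * g t = h t' * g t'
    rw [H t t', G t t']
  | succ N ihN =>
    intro a b h g hab H G
    match a, b with
    | 0, b =>
      have h2 : ADeg b (fun t => h t * g t) :=
        (G.const_mul (h 0)).congr (fun t => by show h 0 * g t = h t * g t; rw [← H 0 t])
      exact h2.mono (by omega)
    | a + 1, 0 =>
      have h2 : ADeg (a + 1) (fun t => h t * g t) :=
        (H.const_mul (g 0)).congr
          (fun t => by show g 0 * h t = h t * g t; rw [G 0 t]; ring)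
      exact h2.mono (by omega)
    | a + 1, b + 1 =>
      have he : a + 1 + (b + 1) = (a + b + 1) + 1 := by ring
      rw [he]
      intro s
      have T1 : ADeg (a + (b + 1)) (fun t => (h (s + t) - h t) * g (s + t)) :=
        ihN a (b + 1) _ _ (by omega) (H s) (G.shift s)
      have T2 : ADeg (a + 1 + b) (fun t => h t * (g (s + t) - g t)) :=
        ihN (a + 1) b _ _ (by omega) H (G s)
      have := (T1.mono (by omega : a + (b+1) ≤ a + b + 1)).add
        (T2.mono (by omega : a + 1 + b ≤ a + b + 1))
      exact this.congr (fun t => by ring)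

lemma ADeg.mul {a b : ℕ} {h g : NNReal → ℝ} (H : ADeg a h) (G : ADeg b g) :
    ADeg (a + b) (fun t => h t * g t) :=
  ADeg.mul_aux (a + b) a b h g le_rfl H G

lemma ADeg.sum {d : ℕ} {ι : Type*} (s : Finset ι) (F : ι → NNReal → ℝ)
    (H : ∀ k ∈ s, ADeg d (F k)) : ADeg d (fun t => ∑ k ∈ s, F k t) := by
  classical
  induction s using Finset.induction_on with
  | empty => exact (ADeg_const d 0).congr (by simp)
  | @insert k s hk ih =>
    have := (H k (Finset.mem_insert_self k s)).add
      (ih (fun k' hk' => H k' (Finset.mem_insert_of_mem hk')))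
    exact this.congr (fun t => by rw [Finset.sum_insert hk])

/-- On an arithmetic progression, a finite-difference-polynomial map agrees with a
polynomial. -/
lemma ADeg.exists_poly_on_progression : ∀ (D : ℕ) (h : NNReal → ℝ), ADeg D h →
    ∀ s : NNReal, ∃ q : ℝ[X], ∀ m : ℕ, h ((m : NNReal) * s) = q.eval (m : ℝ) := by
  intro D
  induction D with
  | zero =>
    intro h H s
    exact ⟨C (h 0), fun m => by rw [eval_C]; exact H _ _⟩
  | succ D ih =>
    intro h H s
    obtain ⟨q', hq'⟩ := ih (fun t => h (s + t) - h t) (H s) s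
    obtain ⟨Q, hQ⟩ := exists_sum_poly q'.natDegree q' le_rfl
    refine ⟨C (h 0) + Q, fun m => ?_⟩
    induction m with
    | zero =>
      have h0 : Q.eval ((0 : ℕ) : ℝ) = 0 := by
        rw [hQ 0, Finset.range_zero, Finset.sum_empty]
      push_cast at h0 ⊢
      rw [zero_mul, eval_add, eval_C, h0, add_zero]
    | succ m ihm =>
      have e1 : ((m + 1 : ℕ) : NNReal) * s = s + (m : NNReal) * s := by
        push_cast; ring
      have e2 : h ((m + 1 : ℕ) * s) = h ((m : NNReal) * s) + q'.eval (m : ℝ) := by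
        rw [e1, ← hq' m]; ring
      rw [e2, ihm]
      simp only [eval_add, eval_C, hQ]
      rw [Finset.sum_range_succ]
      push_cast
      ring

/-- A continuous function with vanishing iterated differences is polynomial. -/
theorem exists_poly_of_continuous_adeg (h : NNReal → ℝ) (hc : Continuous h) (D : ℕ)
    (H : ADeg D h) : ∃ p : ℝ[X], ∀ t : NNReal, h t = p.eval (t : ℝ) := by
  obtain ⟨P, hP⟩ := ADeg.exists_poly_on_progression D h H 1
  have hP' : ∀ m : ℕ, h (m : NNReal) = P.eval (m : ℝ) := fun m => by
    simpa using hP m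
  have key : ∀ k : ℕ, k ≠ 0 → ∀ a : ℕ,
      h ((a : NNReal) * ((k : NNReal))⁻¹) = P.eval ((a : ℝ) / (k : ℝ)) := by
    intro k hk a
    obtain ⟨q, hq⟩ := ADeg.exists_poly_on_progression D h H ((k : NNReal))⁻¹
    have hkR : ((k : ℝ)) ≠ 0 := Nat.cast_ne_zero.mpr hk
    have hkN : ((k : NNReal)) ≠ 0 := Nat.cast_ne_zero.mpr hk
    have hagree : ∀ m : ℕ, (q.comp (C (k : ℝ) * X)).eval (m : ℝ) = P.eval (m : ℝ) := by
      intro m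
      rw [eval_comp, eval_mul, eval_C, eval_X]
      have e1 : (k : ℝ) * m = ((k * m : ℕ) : ℝ) := by push_cast; ring
      rw [e1, ← hq (k * m)]
      have e2 : ((k * m : ℕ) : NNReal) * ((k : NNReal))⁻¹ = (m : NNReal) := by
        push_cast
        rw [mul_comm (k : NNReal) (m : NNReal), mul_assoc, mul_inv_cancel₀ hkN, mul_one]
      rw [e2, hP' m]
    have hGP : q.comp (C (k : ℝ) * X) = P :=
      Polynomial.eq_of_infinite_eval_eq _ _
        (Set.infinite_of_injective_forall_mem Nat.cast_injective hagree)
    rw [hq a, ← hGP, eval_comp, eval_mul, eval_C, eval_X, mul_comm,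
      div_mul_cancel₀ _ hkR]
  refine ⟨P, fun t => ?_⟩
  set a : ℕ → ℕ := fun m => ⌊(t : ℝ) * m⌋₊ with ha
  have htr : Filter.Tendsto (fun m : ℕ => (a m : ℝ) / m) Filter.atTop (nhds (t : ℝ)) := by
    have hlow : Filter.Tendsto (fun m : ℕ => (t : ℝ) - 1 / m) Filter.atTop
        (nhds (t : ℝ)) := by
      simpa using Filter.Tendsto.const_sub (t : ℝ) tendsto_one_div_atTop_nhds_zero_nat
    apply tendsto_of_tendsto_of_tendsto_of_le_of_le' hlow tendsto_const_nhds
    · refine Filter.eventually_atTop.2 ⟨1, fun m hm => ?_⟩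
      have hm0 : (0 : ℝ) < m := by exact_mod_cast hm
      have h1 : (t : ℝ) * m < a m + 1 := Nat.lt_floor_add_one _
      rw [sub_le_iff_le_add, ← add_div, le_div_iff₀ hm0]
      linarith
    · refine Filter.eventually_atTop.2 ⟨1, fun m hm => ?_⟩
      have hm0 : (0 : ℝ) < m := by exact_mod_cast hm
      rw [div_le_iff₀ hm0]
      exact Nat.floor_le (by positivity)
  have hxt : Filter.Tendsto (fun m : ℕ => (a m : NNReal) * ((m : NNReal))⁻¹)
      Filter.atTop (nhds t) := by
    apply NNReal.tendsto_coe.1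
    apply htr.congr
    intro m
    rw [NNReal.coe_mul, NNReal.coe_inv, NNReal.coe_natCast, NNReal.coe_natCast,
      div_eq_mul_inv]
  have h1 : Filter.Tendsto (fun m : ℕ => h ((a m : NNReal) * ((m : NNReal))⁻¹))
      Filter.atTop (nhds (h t)) := (hc.tendsto t).comp hxt
  have h2 : Filter.Tendsto (fun m : ℕ => P.eval ((a m : ℝ) / m)) Filter.atTop
      (nhds (P.eval (t : ℝ))) := ((P.continuous).tendsto _).comp htr
  have hev : (fun m : ℕ => h ((a m : NNReal) * ((m : NNReal))⁻¹)) =ᶠ[Filter.atTop]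
      (fun m : ℕ => P.eval ((a m : ℝ) / m)) :=
    Filter.eventually_atTop.2 ⟨1, fun m hm => key m (by omega) (a m)⟩
  exact tendsto_nhds_unique h1 (Filter.Tendsto.congr' hev.symm h2)

end Scalar

section MatrixPart

variable {n : ℕ}

/-- The matrix-valued function underlying `f : ℝ≥0 → 𝒰_n(ℝ)`. -/
def mval (f : NNReal → ↥(UpperUnitriangular n)) : NNReal → Matrix (Fin n) (Fin n) ℝ :=
  fun t => ((f t : (Matrix (Fin n) (Fin n) ℝ)ˣ) : Matrix (Fin n) (Fin n) ℝ)

lemma mval_lower (f : NNReal → ↥(UpperUnitriangular n)) (t : NNReal) {i j : Fin n}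
    (h : (j : ℕ) < (i : ℕ)) : mval f t i j = 0 := by
  have := (f t).2 i j (by rw [Fin.le_def]; omega)
  rw [mval, this, if_neg]
  intro e; subst e; omega

lemma mval_diag (f : NNReal → ↥(UpperUnitriangular n)) (t : NNReal) (i : Fin n) :
    mval f t i i = 1 := by
  have := (f t).2 i i le_rfl
  rw [mval, this, if_pos rfl]

/-- entry-wise polynomial bounds for a unitriangular matrix map. -/
def GoodU (B : ℕ → ℕ) (g : NNReal → Matrix (Fin n) (Fin n) ℝ) : Prop :=
  (∀ i j : Fin n, (j : ℕ) < (i : ℕ) → ∀ t, g t i j = 0) ∧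
  (∀ (i : Fin n) (t : NNReal), g t i i = 1) ∧
  (∀ i j : Fin n, (i : ℕ) < (j : ℕ) → PolyDeg (B ((j : ℕ) - (i : ℕ))) (fun t => g t i j))

/-- entry-wise polynomial bounds for a strictly upper triangular matrix map. -/
def StrictG (B : ℕ → ℕ) (S : NNReal → Matrix (Fin n) (Fin n) ℝ) : Prop :=
  (∀ i j : Fin n, (j : ℕ) ≤ (i : ℕ) → ∀ t, S t i j = 0) ∧
  (∀ i j : Fin n, (i : ℕ) < (j : ℕ) → PolyDeg (B ((j : ℕ) - (i : ℕ))) (fun t => S t i j))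

def SupAdd (B : ℕ → ℕ) : Prop := ∀ a b, 1 ≤ a → 1 ≤ b → B a + B b ≤ B (a + b)

def SupAddS (B : ℕ → ℕ) : Prop :=
  ∀ a b, 1 ≤ a → 1 ≤ b → B a + B b = 0 ∨ B a + B b + 1 ≤ B (a + b)

lemma SupAddS.toSupAdd {B : ℕ → ℕ} (h : SupAddS B) : SupAdd B := by
  intro a b ha hb
  rcases h a b ha hb with h' | h' <;> omega

lemma SupAddS.sub1 {B : ℕ → ℕ} (h : SupAddS B) : SupAddS (fun m => B m - 1) := by
  intro a b ha hb
  show B a - 1 + (B b - 1) = 0 ∨ B a - 1 + (B b - 1) + 1 ≤ B (a + b) - 1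
  rcases h a b ha hb with h' | h' <;> omega

lemma StrictG.mul {B : ℕ → ℕ} {S T : NNReal → Matrix (Fin n) (Fin n) ℝ}
    (hB : SupAdd B) (hS : StrictG B S) (hT : StrictG B T) :
    StrictG B (fun t => S t * T t) := by
  constructor
  · intro i j hji t
    show (S t * T t) i j = 0
    rw [Matrix.mul_apply]
    apply Finset.sum_eq_zero
    intro k _
    rcases le_or_gt (k : ℕ) (i : ℕ) with hk | hk
    · rw [hS.1 i k hk t, zero_mul]
    · rw [hT.1 k j (by omega) t, mul_zero]
  · intro i j hij
    apply PolyDeg.congr (h := fun t => ∑ k : Fin n, S t i k * T t k j)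
    · apply PolyDeg.sum
      intro k _
      rcases le_or_gt (k : ℕ) (i : ℕ) with hk | hk
      · exact (PolyDeg_const _ 0).congr (fun t => by rw [hS.1 i k hk t, zero_mul])
      rcases le_or_gt (j : ℕ) (k : ℕ) with hk' | hk'
      · exact (PolyDeg_const _ 0).congr (fun t => by rw [hT.1 k j hk' t, mul_zero])
      · have := (hS.2 i k hk).mul (hT.2 k j hk')
        apply this.mono
        have h2 := hB ((k : ℕ) - i) ((j : ℕ) - k) (by omega) (by omega)
        have h3 : ((k : ℕ) - i) + ((j : ℕ) - k) = (j : ℕ) - i := by omega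
        rw [h3] at h2
        exact h2
    · intro t
      show (∑ k : Fin n, S t i k * T t k j) = (S t * T t) i j
      rw [Matrix.mul_apply]

lemma StrictG.pow {B : ℕ → ℕ} {S : NNReal → Matrix (Fin n) (Fin n) ℝ}
    (hB : SupAdd B) (hS : StrictG B S) : ∀ k : ℕ, StrictG B (fun t => S t ^ (k + 1)) := by
  intro k
  induction k with
  | zero => simpa [pow_one] using hS
  | succ k ih =>
    have e : (fun t => S t ^ (k + 1 + 1)) = fun t => (S t ^ (k + 1)) * S t :=
      funext fun t => by rw [pow_succ]
    rw [e]
    exact StrictG.mul hB ih hS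

lemma strict_pow_zero {S : Matrix (Fin n) (Fin n) ℝ}
    (hS : ∀ i j : Fin n, (j : ℕ) ≤ (i : ℕ) → S i j = 0) :
    ∀ (k : ℕ) (i j : Fin n), (j : ℕ) < (i : ℕ) + k → (S ^ k) i j = 0 := by
  intro k
  induction k with
  | zero =>
    intro i j h
    rw [pow_zero, Matrix.one_apply, if_neg]
    intro e; subst e; omega
  | succ k ih =>
    intro i j h
    rw [pow_succ, Matrix.mul_apply]
    apply Finset.sum_eq_zero
    intro m _
    rcases lt_or_ge (m : ℕ) ((i : ℕ) + k) with hm | hm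
    · rw [ih i m hm, zero_mul]
    · rw [hS m j (by omega), mul_zero]

lemma strict_pow_n {S : Matrix (Fin n) (Fin n) ℝ}
    (hS : ∀ i j : Fin n, (j : ℕ) ≤ (i : ℕ) → S i j = 0) : S ^ n = 0 := by
  ext i j
  rw [strict_pow_zero hS n i j (by omega), Matrix.zero_apply]

/-- candidate for the inverse of a unitriangular matrix map: geometric series. -/
def invApprox (g : NNReal → Matrix (Fin n) (Fin n) ℝ) : NNReal → Matrix (Fin n) (Fin n) ℝ :=
  fun t => ∑ k ∈ Finset.range n, (1 - g t) ^ k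

lemma one_sub_strict {g : NNReal → Matrix (Fin n) (Fin n) ℝ}
    (hlow : ∀ i j : Fin n, (j : ℕ) < (i : ℕ) → ∀ t, g t i j = 0)
    (hdiag : ∀ (i : Fin n) (t : NNReal), g t i i = 1) (t : NNReal) :
    ∀ i j : Fin n, (j : ℕ) ≤ (i : ℕ) → (1 - g t) i j = 0 := by
  intro i j hji
  rw [Matrix.sub_apply]
  rcases eq_or_lt_of_le hji with h | h
  · have hji' : j = i := Fin.ext h
    subst hji'
    rw [Matrix.one_apply_eq, hdiag j t, sub_self]
  · rw [Matrix.one_apply_ne (by intro e; subst e; omega), hlow i j h t, sub_zero]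

lemma mul_invApprox {g : NNReal → Matrix (Fin n) (Fin n) ℝ}
    (hlow : ∀ i j : Fin n, (j : ℕ) < (i : ℕ) → ∀ t, g t i j = 0)
    (hdiag : ∀ (i : Fin n) (t : NNReal), g t i i = 1) (t : NNReal) :
    g t * invApprox g t = 1 := by
  have hstrict := one_sub_strict hlow hdiag t
  have hnil : (1 - g t) ^ n = 0 := strict_pow_n hstrict
  have hgeom := mul_geom_sum (1 - g t) n
  rw [hnil] at hgeom
  have e1 : (1 - g t) - 1 = -(g t) := by abel
  rw [e1] at hgeom
  have : -(g t * invApprox g t) = -1 := by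
    rw [← neg_mul]
    rw [invApprox]
    rw [hgeom, zero_sub]
  have := neg_injective this
  exact this

lemma invApprox_mul {g : NNReal → Matrix (Fin n) (Fin n) ℝ}
    (hlow : ∀ i j : Fin n, (j : ℕ) < (i : ℕ) → ∀ t, g t i j = 0)
    (hdiag : ∀ (i : Fin n) (t : NNReal), g t i i = 1) (t : NNReal) :
    invApprox g t * g t = 1 :=
  mul_eq_one_comm.mp (mul_invApprox hlow hdiag t)

lemma inv_coe_eq_invApprox (f : NNReal → ↥(UpperUnitriangular n)) (t : NNReal) :
    (((f t : (Matrix (Fin n) (Fin n) ℝ)ˣ))⁻¹ : (Matrix (Fin n) (Fin n) ℝ)ˣ).val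
      = invApprox (mval f) t :=
  Units.inv_eq_of_mul_eq_one_right
    (mul_invApprox (fun i j h t' => mval_lower f t' h) (fun i t' => mval_diag f t' i) t)

lemma GoodU.inv {B : ℕ → ℕ} {g : NNReal → Matrix (Fin n) (Fin n) ℝ}
    (hB : SupAdd B) (hg : GoodU B g) : GoodU B (invApprox g) := by
  obtain ⟨hlow, hdiag, habove⟩ := hg
  have hstrict : StrictG B (fun t => 1 - g t) := by
    constructor
    · intro i j hji t
      exact one_sub_strict hlow hdiag t i j hji
    · intro i j hij
      apply ((habove i j hij).neg).congr
      intro t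
      show -(g t i j) = (1 - g t) i j
      rw [Matrix.sub_apply, Matrix.one_apply_ne (by intro e; subst e; omega), zero_sub]
  have hpow := fun k => StrictG.pow hB hstrict k
  have hentry : ∀ (t : NNReal) (i j : Fin n),
      invApprox g t i j = ∑ k ∈ Finset.range n, ((1 - g t) ^ k) i j := by
    intro t i j
    rw [invApprox, Matrix.sum_apply]
  refine ⟨?_, ?_, ?_⟩
  · intro i j hji t
    rw [hentry]
    apply Finset.sum_eq_zero
    intro k _
    match k with
    | 0 =>
      rw [pow_zero, Matrix.one_apply_ne (by intro e; subst e; omega)]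
    | k + 1 =>
      exact (hpow k).1 i j (by omega) t
  · intro i t
    rw [hentry]
    have hn : 0 < n := i.pos
    rw [Finset.sum_eq_single_of_mem 0 (Finset.mem_range.mpr hn)]
    · rw [pow_zero, Matrix.one_apply_eq]
    · intro k _ hk
      match k with
      | 0 => exact absurd rfl hk
      | k + 1 => exact (hpow k).1 i i le_rfl t
  · intro i j hij
    apply PolyDeg.congr (h := fun t => ∑ k ∈ Finset.range n, ((1 - g t) ^ k) i j)
    · apply PolyDeg.sum
      intro k _
      match k with
      | 0 =>
        exact (PolyDeg_const _ 0).congr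
          (fun t => by rw [pow_zero, Matrix.one_apply_ne (by intro e; subst e; omega)])
      | k + 1 => exact (hpow k).2 i j hij
    · intro t
      rw [hentry]

lemma GoodU.shift {B : ℕ → ℕ} {g : NNReal → Matrix (Fin n) (Fin n) ℝ}
    (hg : GoodU B g) (s : NNReal) : GoodU B (fun t => g (s + t)) :=
  ⟨fun i j h t => hg.1 i j h (s + t), fun i t => hg.2.1 i (s + t),
   fun i j h => (hg.2.2 i j h).shift s⟩

lemma PolyDeg.apply_eq {h : NNReal → ℝ} (H : PolyDeg 0 h) (t t' : NNReal) : h t = h t' := by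
  obtain ⟨p, hp, he⟩ := H
  rw [he t, he t', eq_C_of_natDegree_le_zero hp, eval_C, eval_C]

lemma mval_L (f : NNReal → ↥(UpperUnitriangular n)) (s t : NNReal) :
    mval (fun t => f (s + t) * (f t)⁻¹) t = mval f (s + t) * invApprox (mval f) t := by
  show (((f (s + t) * (f t)⁻¹ : ↥(UpperUnitriangular n)) : (Matrix (Fin n) (Fin n) ℝ)ˣ) :
    Matrix (Fin n) (Fin n) ℝ) = _
  rw [MulMemClass.coe_mul, InvMemClass.coe_inv, Units.val_mul, inv_coe_eq_invApprox]
  rfl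

lemma mval_R (f : NNReal → ↥(UpperUnitriangular n)) (s t : NNReal) :
    mval (fun t => (f t)⁻¹ * f (s + t)) t = invApprox (mval f) t * mval f (s + t) := by
  show (((( f t)⁻¹ * f (s + t) : ↥(UpperUnitriangular n)) : (Matrix (Fin n) (Fin n) ℝ)ˣ) :
    Matrix (Fin n) (Fin n) ℝ) = _
  rw [MulMemClass.coe_mul, InvMemClass.coe_inv, Units.val_mul, inv_coe_eq_invApprox]
  rfl

lemma fmul_invApprox (f : NNReal → ↥(UpperUnitriangular n)) (t : NNReal) :
    mval f t * invApprox (mval f) t = 1 :=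
  mul_invApprox (fun i j h t' => mval_lower f t' h) (fun i t' => mval_diag f t' i) t

lemma invApprox_fmul (f : NNReal → ↥(UpperUnitriangular n)) (t : NNReal) :
    invApprox (mval f) t * mval f t = 1 :=
  invApprox_mul (fun i j h t' => mval_lower f t' h) (fun i t' => mval_diag f t' i) t

lemma GoodU.diffL {B : ℕ → ℕ} {f : NNReal → ↥(UpperUnitriangular n)} (hB : SupAddS B)
    (hg : GoodU B (mval f)) (s : NNReal) :
    GoodU (fun m => B m - 1) (mval (fun t => f (s + t) * (f t)⁻¹)) := by
  have hInv : GoodU B (invApprox (mval f)) := GoodU.inv hB.toSupAdd hg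
  have hDzero : ∀ (t : NNReal) (i k : Fin n), (k : ℕ) ≤ (i : ℕ) →
      mval f (s + t) i k - mval f t i k = 0 := by
    intro t i k hk
    rcases eq_or_lt_of_le hk with h | h
    · have hk' : k = i := Fin.ext h
      subst hk'
      rw [mval_diag, mval_diag, sub_self]
    · rw [mval_lower f _ h, mval_lower f _ h, sub_self]
  have key : ∀ (t : NNReal) (i j : Fin n), mval (fun t => f (s + t) * (f t)⁻¹) t i j
      = (1 : Matrix (Fin n) (Fin n) ℝ) i j
        + ∑ k : Fin n, (mval f (s + t) i k - mval f t i k) * invApprox (mval f) t k j := by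
    intro t i j
    rw [mval_L f s t]
    have hm : mval f (s + t) * invApprox (mval f) t
        = 1 + (mval f (s + t) - mval f t) * invApprox (mval f) t := by
      rw [sub_mul, fmul_invApprox]
      abel
    rw [hm, Matrix.add_apply, Matrix.mul_apply]
    rfl
  refine ⟨?_, ?_, ?_⟩
  · intro i j hji t
    rw [key, Matrix.one_apply_ne (by intro e; subst e; omega), Finset.sum_eq_zero, add_zero]
    intro k _
    rcases le_or_gt (k : ℕ) (i : ℕ) with hk | hk
    · rw [hDzero t i k hk, zero_mul]
    · rw [hInv.1 k j (by omega) t, mul_zero]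
  · intro i t
    rw [key, Matrix.one_apply_eq, Finset.sum_eq_zero, add_zero]
    intro k _
    rcases le_or_gt (k : ℕ) (i : ℕ) with hk | hk
    · rw [hDzero t i k hk, zero_mul]
    · rw [hInv.1 k i (by omega) t, mul_zero]
  · intro i j hij
    apply PolyDeg.congr
      (h := fun t => ∑ k : Fin n, (mval f (s + t) i k - mval f t i k) * invApprox (mval f) t k j)
    · apply PolyDeg.sum
      intro k _
      rcases le_or_gt (k : ℕ) (i : ℕ) with hk | hk
      · exact (PolyDeg_const _ 0).congr (fun t => by rw [hDzero t i k hk, zero_mul])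
      rcases lt_trichotomy (j : ℕ) (k : ℕ) with hk' | hk' | hk'
      · exact (PolyDeg_const _ 0).congr (fun t => by rw [hInv.1 k j hk' t, mul_zero])
      · -- k = j
        have hkj : k = j := Fin.ext hk'.symm
        subst hkj
        obtain ⟨p, hp1, _, hp3⟩ := (hg.2.2 i k hij).diff s
        exact ⟨p, hp1, fun t => by
          show (mval f (s + t) i k - mval f t i k) * invApprox (mval f) t k k = _
          rw [hInv.2.1 k t, mul_one, hp3 t]⟩
      · -- i < k < j
        obtain ⟨p, hp1, hp2, hp3⟩ := (hg.2.2 i k hk).diff s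
        by_cases hBa : B ((k : ℕ) - (i : ℕ)) = 0
        · refine (PolyDeg_const _ 0).congr (fun t => ?_)
          rw [hp3 t, hp2 hBa, eval_zero, zero_mul]
        · have hD : PolyDeg (B ((k : ℕ) - (i : ℕ)) - 1)
              (fun t => mval f (s + t) i k - mval f t i k) := ⟨p, hp1, hp3⟩
          have := hD.mul (hInv.2.2 k j hk')
          have hle : B ((k : ℕ) - (i : ℕ)) - 1 + B ((j : ℕ) - (k : ℕ))
              ≤ B ((j : ℕ) - (i : ℕ)) - 1 := by
            rcases hB ((k : ℕ) - i) ((j : ℕ) - k) (by omega) (by omega) with h0 | h1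
            · omega
            · have e : (k : ℕ) - (i : ℕ) + ((j : ℕ) - (k : ℕ)) = (j : ℕ) - (i : ℕ) := by omega
              rw [e] at h1
              omega
          exact this.mono hle
    · intro t
      rw [key, Matrix.one_apply_ne (by intro e; subst e; omega), zero_add]

lemma GoodU.diffR {B : ℕ → ℕ} {f : NNReal → ↥(UpperUnitriangular n)} (hB : SupAddS B)
    (hg : GoodU B (mval f)) (s : NNReal) :
    GoodU (fun m => B m - 1) (mval (fun t => (f t)⁻¹ * f (s + t))) := by
  have hInv : GoodU B (invApprox (mval f)) := GoodU.inv hB.toSupAdd hg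
  have hDzero : ∀ (t : NNReal) (k j : Fin n), (j : ℕ) ≤ (k : ℕ) →
      mval f (s + t) k j - mval f t k j = 0 := by
    intro t k j hk
    rcases eq_or_lt_of_le hk with h | h
    · have hk' : j = k := Fin.ext h
      subst hk'
      rw [mval_diag, mval_diag, sub_self]
    · rw [mval_lower f _ h, mval_lower f _ h, sub_self]
  have key : ∀ (t : NNReal) (i j : Fin n), mval (fun t => (f t)⁻¹ * f (s + t)) t i j
      = (1 : Matrix (Fin n) (Fin n) ℝ) i j
        + ∑ k : Fin n, invApprox (mval f) t i k * (mval f (s + t) k j - mval f t k j) := by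
    intro t i j
    rw [mval_R f s t]
    have hm : invApprox (mval f) t * mval f (s + t)
        = 1 + invApprox (mval f) t * (mval f (s + t) - mval f t) := by
      rw [mul_sub, invApprox_fmul]
      abel
    rw [hm, Matrix.add_apply, Matrix.mul_apply]
    rfl
  refine ⟨?_, ?_, ?_⟩
  · intro i j hji t
    rw [key, Matrix.one_apply_ne (by intro e; subst e; omega), Finset.sum_eq_zero, add_zero]
    intro k _
    rcases lt_or_ge (k : ℕ) (i : ℕ) with hk | hk
    · rw [hInv.1 i k hk t, zero_mul]
    · rw [hDzero t k j (by omega), mul_zero]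
  · intro i t
    rw [key, Matrix.one_apply_eq, Finset.sum_eq_zero, add_zero]
    intro k _
    rcases lt_or_ge (k : ℕ) (i : ℕ) with hk | hk
    · rw [hInv.1 i k hk t, zero_mul]
    · rw [hDzero t k i (by omega), mul_zero]
  · intro i j hij
    apply PolyDeg.congr
      (h := fun t => ∑ k : Fin n, invApprox (mval f) t i k * (mval f (s + t) k j - mval f t k j))
    · apply PolyDeg.sum
      intro k _
      rcases le_or_gt (j : ℕ) (k : ℕ) with hk | hk
      · exact (PolyDeg_const _ 0).congr (fun t => by rw [hDzero t k j hk, mul_zero])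
      rcases lt_trichotomy (k : ℕ) (i : ℕ) with hk' | hk' | hk'
      · exact (PolyDeg_const _ 0).congr (fun t => by rw [hInv.1 i k hk' t, zero_mul])
      · -- k = i
        have hki : k = i := Fin.ext hk'
        subst hki
        obtain ⟨p, hp1, _, hp3⟩ := (hg.2.2 k j hij).diff s
        exact ⟨p, hp1, fun t => by
          show invApprox (mval f) t k k * (mval f (s + t) k j - mval f t k j) = _
          rw [hInv.2.1 k t, one_mul, hp3 t]⟩
      · -- i < k < j
        obtain ⟨p, hp1, hp2, hp3⟩ := (hg.2.2 k j hk).diff s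
        by_cases hBb : B ((j : ℕ) - (k : ℕ)) = 0
        · refine (PolyDeg_const _ 0).congr (fun t => ?_)
          rw [hp3 t, hp2 hBb, eval_zero, mul_zero]
        · have hD : PolyDeg (B ((j : ℕ) - (k : ℕ)) - 1)
              (fun t => mval f (s + t) k j - mval f t k j) := ⟨p, hp1, hp3⟩
          have := (hInv.2.2 i k hk').mul hD
          have hle : B ((k : ℕ) - (i : ℕ)) + (B ((j : ℕ) - (k : ℕ)) - 1)
              ≤ B ((j : ℕ) - (i : ℕ)) - 1 := by
            rcases hB ((k : ℕ) - i) ((j : ℕ) - k) (by omega) (by omega) with h0 | h1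
            · omega
            · have e : (k : ℕ) - (i : ℕ) + ((j : ℕ) - (k : ℕ)) = (j : ℕ) - (i : ℕ) := by omega
              rw [e] at h1
              omega
          exact this.mono hle
    · intro t
      rw [key, Matrix.one_apply_ne (by intro e; subst e; omega), zero_add]

lemma degLE_of_const {S : Type*} [AddCommSemigroup S] {G : Type*} [Group G] :
    ∀ (N : ℕ) (g : S → G), (∀ t t', g t = g t') → DegLE N g := by
  intro N
  induction N with
  | zero => intro g h; exact h
  | succ N ih =>
    intro g h s
    exact ⟨ih _ (fun t t' => by rw [h (s + t) (s + t'), h t t']),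
      ih _ (fun t t' => by rw [h (s + t) (s + t'), h t t'])⟩

lemma goodU_const_of_sum_zero {B : ℕ → ℕ} {f : NNReal → ↥(UpperUnitriangular n)}
    (hg : GoodU B (mval f)) (h0 : ∑ m ∈ Finset.range n, B (m + 1) = 0) :
    ∀ t t', f t = f t' := by
  intro t t'
  have hB0 : ∀ m, m < n → B (m + 1) = 0 := fun m hm =>
    (Finset.sum_eq_zero_iff.mp h0) m (Finset.mem_range.mpr hm)
  apply Subtype.ext
  apply Units.ext
  ext i j
  show mval f t i j = mval f t' i j
  rcases lt_trichotomy (i : ℕ) (j : ℕ) with h | h | h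
  · have hBij : B ((j : ℕ) - (i : ℕ)) = 0 := by
      have h1 := hB0 ((j : ℕ) - (i : ℕ) - 1) (by omega)
      have e : (j : ℕ) - (i : ℕ) - 1 + 1 = (j : ℕ) - (i : ℕ) := by omega
      rwa [e] at h1
    have := hg.2.2 i j h
    rw [hBij] at this
    exact this.apply_eq t t'
  · have : i = j := Fin.ext h
    subst this
    rw [mval_diag, mval_diag]
  · rw [mval_lower f t h, mval_lower f t' h]

lemma degLE_of_goodU : ∀ (N : ℕ) (B : ℕ → ℕ), SupAddS B →
    ∀ f : NNReal → ↥(UpperUnitriangular n), GoodU B (mval f) →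
    (∑ m ∈ Finset.range n, B (m + 1)) ≤ N → DegLE N f := by
  intro N
  induction N with
  | zero =>
    intro B _ f hf hsum
    exact goodU_const_of_sum_zero hf (by omega)
  | succ N ih =>
    intro B hB f hf hsum
    by_cases h0 : (∑ m ∈ Finset.range n, B (m + 1)) = 0
    · exact degLE_of_const (N + 1) f (goodU_const_of_sum_zero hf h0)
    · intro s
      have hsum' : (∑ m ∈ Finset.range n, (B (m + 1) - 1)) ≤ N := by
        obtain ⟨m0, hm0mem, hm0⟩ := Finset.exists_ne_zero_of_sum_ne_zero h0
        have e1 : ∑ m ∈ Finset.range n, (B (m + 1) - 1)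
            = (B (m0 + 1) - 1) + ∑ m ∈ (Finset.range n).erase m0, (B (m + 1) - 1) :=
          (Finset.add_sum_erase _ _ hm0mem).symm
        have e2 : ∑ m ∈ Finset.range n, B (m + 1)
            = B (m0 + 1) + ∑ m ∈ (Finset.range n).erase m0, B (m + 1) :=
          (Finset.add_sum_erase _ _ hm0mem).symm
        have e3 : ∑ m ∈ (Finset.range n).erase m0, (B (m + 1) - 1)
            ≤ ∑ m ∈ (Finset.range n).erase m0, B (m + 1) :=
          Finset.sum_le_sum (fun _ _ => Nat.sub_le _ _)
        omega
      exact ⟨ih _ hB.sub1 _ (hf.diffL hB s) hsum', ih _ hB.sub1 _ (hf.diffR hB s) hsum'⟩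

end MatrixPart


section Forward

variable {n : ℕ}

lemma pow_ineq (e a b : ℕ) (ha : 1 ≤ a) (hb : 1 ≤ b) :
    (e + 2) ^ a + (e + 3) ^ b ≤ (e + 3) ^ (a + b) - 1 := by
  have h1 : (e + 2) ^ a + 1 ≤ (e + 3) ^ a := by
    have := Nat.pow_lt_pow_left (show e + 2 < e + 3 by omega) (show a ≠ 0 by omega)
    omega
  have hu : e + 3 ≤ (e + 3) ^ a := Nat.le_self_pow (by omega) _
  have hv : e + 3 ≤ (e + 3) ^ b := Nat.le_self_pow (by omega) _
  have h2 : (e + 3) ^ a + (e + 3) ^ b ≤ (e + 3) ^ (a + b) := by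
    rw [pow_add]
    nlinarith
  omega

lemma entry_adeg : ∀ (d : ℕ) (f : NNReal → ↥(UpperUnitriangular n)), DegLE d f →
    ∀ i j : Fin n, (i : ℕ) < (j : ℕ) →
    ADeg ((d + 2) ^ ((j : ℕ) - (i : ℕ))) (fun t => mval f t i j) := by
  intro d
  induction d with
  | zero =>
    intro f hf i j _
    have h0 : ADeg 0 (fun t => mval f t i j) := by
      intro t t'
      show mval f t i j = mval f t' i j
      unfold mval
      rw [hf t t']
    exact h0.mono (Nat.zero_le _)
  | succ d ih =>
    intro f hf
    suffices hsuf : ∀ g : ℕ, ∀ i j : Fin n, (i : ℕ) < (j : ℕ) → (j : ℕ) - (i : ℕ) ≤ g →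
        ADeg ((d + 3) ^ ((j : ℕ) - (i : ℕ))) (fun t => mval f t i j) by
      intro i j hij
      have := hsuf ((j : ℕ) - (i : ℕ)) i j hij le_rfl
      have e : d + 1 + 2 = d + 3 := by omega
      rwa [e]
    intro g
    induction g with
    | zero => intro i j hij hg; omega
    | succ g ihg =>
      intro i j hij hg
      have hm1 : 1 ≤ (j : ℕ) - (i : ℕ) := by omega
      have hDe : (d + 3) ^ ((j : ℕ) - (i : ℕ))
          = ((d + 3) ^ ((j : ℕ) - (i : ℕ)) - 1) + 1 := by
        have : 0 < (d + 3) ^ ((j : ℕ) - (i : ℕ)) := Nat.pow_pos (by omega)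
        omega
      rw [hDe]
      set D := (d + 3) ^ ((j : ℕ) - (i : ℕ)) - 1 with hD
      intro s
      have hgs : DegLE d (fun t => f (s + t) * (f t)⁻¹) := (hf s).1
      have hid : ∀ t : NNReal, mval f (s + t) i j - mval f t i j
          = ∑ k ∈ Finset.univ.erase i,
              mval (fun t => f (s + t) * (f t)⁻¹) t i k * mval f t k j := by
        intro t
        have h1 : mval f (s + t)
            = mval (fun t => f (s + t) * (f t)⁻¹) t * mval f t := by
          rw [mval_L f s t, mul_assoc, invApprox_fmul, mul_one]
        have h2 : mval f (s + t) i j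
            = ∑ k : Fin n, mval (fun t => f (s + t) * (f t)⁻¹) t i k * mval f t k j := by
          rw [h1, Matrix.mul_apply]
        rw [h2, ← Finset.add_sum_erase _ _ (Finset.mem_univ i),
          mval_diag (fun t => f (s + t) * (f t)⁻¹) t i, one_mul]
        ring
      apply ADeg.congr
        (ADeg.sum (Finset.univ.erase i)
          (fun k => fun t => mval (fun t => f (s + t) * (f t)⁻¹) t i k * mval f t k j) ?_)
        (fun t => (hid t).symm)
      intro k hk
      have hki : k ≠ i := Finset.ne_of_mem_erase hk
      rcases lt_trichotomy (k : ℕ) (i : ℕ) with h1 | h1 | h1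
      · exact (ADeg_const D 0).congr (fun t => by
          show (0 : ℝ) = mval (fun t => f (s + t) * (f t)⁻¹) t i k * mval f t k j
          rw [mval_lower (fun t => f (s + t) * (f t)⁻¹) t h1, zero_mul])
      · exact absurd (Fin.ext h1) hki
      · rcases lt_trichotomy (k : ℕ) (j : ℕ) with h2 | h2 | h2
        · -- i < k < j
          have hA := ih _ hgs i k h1
          have hB := ihg k j h2 (by omega)
          have hmul := hA.mul hB
          apply hmul.mono
          have hpi := pow_ineq d ((k : ℕ) - (i : ℕ)) ((j : ℕ) - (k : ℕ)) (by omega) (by omega)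
          have e : (k : ℕ) - (i : ℕ) + ((j : ℕ) - (k : ℕ)) = (j : ℕ) - (i : ℕ) := by omega
          rw [e] at hpi
          omega
        · -- k = j
          have hkj : k = j := Fin.ext h2
          subst hkj
          have hA := ih _ hgs i k h1
          have hA' := hA.congr (fun t => by
            show mval (fun t => f (s + t) * (f t)⁻¹) t i k
              = mval (fun t => f (s + t) * (f t)⁻¹) t i k * mval f t k k
            rw [mval_diag f t k, mul_one])
          apply hA'.mono
          have hlt : (d + 2) ^ ((k : ℕ) - (i : ℕ)) < (d + 3) ^ ((k : ℕ) - (i : ℕ)) :=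
            Nat.pow_lt_pow_left (by omega) (by omega)
          omega
        · -- j < k
          exact (ADeg_const D 0).congr (fun t => by
            show (0 : ℝ) = mval (fun t => f (s + t) * (f t)⁻¹) t i k * mval f t k j
            rw [mval_lower f t h2, mul_zero])

lemma GoodU.continuous {B : ℕ → ℕ} {g : NNReal → Matrix (Fin n) (Fin n) ℝ}
    (hg : GoodU B g) : Continuous g := by
  apply continuous_matrix
  intro i j
  rcases lt_trichotomy (i : ℕ) (j : ℕ) with h | h | h
  · obtain ⟨p, _, he⟩ := hg.2.2 i j h
    have e : (fun t => g t i j) = fun t : NNReal => p.eval (t : ℝ) := funext he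
    rw [e]
    exact p.continuous.comp NNReal.continuous_coe
  · have hij : i = j := Fin.ext h
    subst hij
    have e : (fun t => g t i i) = fun _ => (1 : ℝ) := funext (fun t => hg.2.1 i t)
    rw [e]
    exact continuous_const
  · have e : (fun t => g t i j) = fun _ => (0 : ℝ) := funext (fun t => hg.1 i j h t)
    rw [e]
    exact continuous_const

end Forward

/-- A map `f : ℝ_{≥0} → 𝒰_n(ℝ)` into the group of upper unitriangular `n × n` real
matrices is a continuous polynomial map if and only if each of its above-diagonal entries
`f_{i,j}`, `i < j`, is a real polynomial function of `t`. -/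
theorem continuous_polynomial_map_unitriangular_iff (n : ℕ)
    (f : NNReal → ↥(UpperUnitriangular n)) :
    (Continuous f ∧ IsPoly f) ↔
      ∀ i j : Fin n, i < j → ∃ p : Polynomial ℝ, ∀ t : NNReal,
        ((f t : (Matrix (Fin n) (Fin n) ℝ)ˣ) : Matrix (Fin n) (Fin n) ℝ) i j
          = p.eval (t : ℝ) := by
  constructor
  · rintro ⟨hc, d, hd⟩ i j hij
    have hmc : Continuous (mval f) :=
      Units.continuous_val.comp (continuous_subtype_val.comp hc)
    have hcont : Continuous (fun t => mval f t i j) := hmc.matrix_elem i j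
    have hA := entry_adeg d f hd i j hij
    obtain ⟨p, hp⟩ := exists_poly_of_continuous_adeg _ hcont _ hA
    exact ⟨p, fun t => hp t⟩
  · intro h
    classical
    set P : Fin n → Fin n → Polynomial ℝ :=
      fun i j => if hij : i < j then Classical.choose (h i j hij) else 0 with hPdef
    have hPs : ∀ (i j : Fin n) (hij : i < j) (t : NNReal),
        mval f t i j = (P i j).eval (t : ℝ) := by
      intro i j hij t
      have e : P i j = Classical.choose (h i j hij) := by
        rw [hPdef]
        simp only
        rw [dif_pos hij]
      rw [e]
      exact Classical.choose_spec (h i j hij) t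
    set c : ℕ := (Finset.univ : Finset (Fin n × Fin n)).sup
      (fun q => (P q.1 q.2).natDegree) with hcdef
    have hc : ∀ i j : Fin n, (P i j).natDegree ≤ c :=
      fun i j => Finset.le_sup (f := fun q : Fin n × Fin n => (P q.1 q.2).natDegree)
        (Finset.mem_univ (i, j))
    set B : ℕ → ℕ := fun m => c * m + m * m with hBdef
    have hBS : SupAddS B := by
      intro a b ha hb
      right
      show c * a + a * a + (c * b + b * b) + 1 ≤ c * (a + b) + (a + b) * (a + b)
      nlinarith
    have hGood : GoodU B (mval f) := by
      refine ⟨fun i j hji t => mval_lower f t hji, fun i t => mval_diag f t i, ?_⟩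
      intro i j hij
      refine ⟨P i j, ?_, fun t => hPs i j (Fin.lt_def.mpr hij) t⟩
      have h1 : 1 ≤ (j : ℕ) - (i : ℕ) := by omega
      calc (P i j).natDegree ≤ c := hc i j
        _ ≤ B ((j : ℕ) - (i : ℕ)) := by
            show c ≤ c * ((j : ℕ) - (i : ℕ)) + ((j : ℕ) - (i : ℕ)) * ((j : ℕ) - (i : ℕ))
            nlinarith
    constructor
    · have hval : Continuous (fun t => (f t : (Matrix (Fin n) (Fin n) ℝ)ˣ)) := by
        apply Units.continuous_iff.mpr
        constructor
        · exact hGood.continuous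
        · have hIG : GoodU B (invApprox (mval f)) := hGood.inv hBS.toSupAdd
          have e : (fun t : NNReal => ((((f t : (Matrix (Fin n) (Fin n) ℝ)ˣ))⁻¹ :
              (Matrix (Fin n) (Fin n) ℝ)ˣ) : Matrix (Fin n) (Fin n) ℝ)) = invApprox (mval f) :=
            funext (fun t => inv_coe_eq_invApprox f t)
          show Continuous (fun t : NNReal => ((((f t : (Matrix (Fin n) (Fin n) ℝ)ˣ))⁻¹ :
              (Matrix (Fin n) (Fin n) ℝ)ˣ) : Matrix (Fin n) (Fin n) ℝ))
          rw [e]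
          exact hIG.continuous
      exact hval.subtype_mk (fun t => (f t).2)
    · exact ⟨∑ m ∈ Finset.range n, B (m + 1),
        degLE_of_goodU _ B hBS f hGood le_rfl⟩


end PaperPoly
end

section
/- Let G be a finite group and g : ℕ → G a polynomial sequence (a polynomial map from the additive monoid ℕ of nonnegative integers to G). Then g is periodic: there exists a positive integer P such that g(i + P) = g(i) for all i ∈ ℕ. -/
namespace PaperPoly

/-- Product `h (m + (j-1)) * ⋯ * h (m+1) * h m`. -/
def prodSeg {G : Type*} [Group G] (h : ℕ → G) (m : ℕ) : ℕ → G
  | 0 => 1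
  | j + 1 => h (m + j) * prodSeg h m j

lemma prodSeg_congr {G : Type*} [Group G] {h : ℕ → G} {m m' : ℕ}
    (H : ∀ j, h (m + j) = h (m' + j)) : ∀ j, prodSeg h m j = prodSeg h m' j
  | 0 => rfl
  | j + 1 => by rw [prodSeg, prodSeg, H j, prodSeg_congr H j]

lemma step_prodSeg {G : Type*} [Group G] {g h : ℕ → G}
    (H : ∀ t, g (t + 1) = h t * g t) (m : ℕ) : ∀ j, g (m + j) = prodSeg h m j * g m
  | 0 => by simp [prodSeg]
  | j + 1 => by
      rw [← Nat.add_assoc, H (m + j), step_prodSeg H m j, prodSeg, mul_assoc]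

lemma periodic_of_step_periodic {G : Type*} [Group G] {g h : ℕ → G} {P : ℕ}
    (H : ∀ t, g (t + 1) = h t * g t) (hP : ∀ t, h (t + P) = h t) :
    ∀ (k m : ℕ), g (m + k * P) = (prodSeg h m P) ^ k * g m := by
  have hkp : ∀ (k t : ℕ), h (t + k * P) = h t := by
    intro k
    induction k with
    | zero => simp
    | succ k ih =>
      intro t
      have : t + (k + 1) * P = t + P + k * P := by ring
      rw [this, ih (t + P), hP t]
  intro k
  induction k with
  | zero => simp
  | succ k ih =>
    intro m
    have e1 : m + (k + 1) * P = (m + k * P) + P := by ring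
    rw [e1, step_prodSeg H (m + k * P) P, ih m]
    have e2 : prodSeg h (m + k * P) P = prodSeg h m P := by
      refine prodSeg_congr (fun j => ?_) P
      have : m + k * P + j = m + j + k * P := by ring
      rw [this, hkp]
    rw [e2, pow_succ, mul_assoc, ← mul_assoc (prodSeg h m P), ← pow_succ', pow_succ]
    group

lemma degLE_periodic {G : Type*} [Group G] [Finite G] :
    ∀ (d : ℕ) (g : ℕ → G), DegLE d g → ∃ P : ℕ, 0 < P ∧ ∀ i : ℕ, g (i + P) = g i := by
  intro d
  induction d with
  | zero =>
    intro g hg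
    exact ⟨1, Nat.one_pos, fun i => hg (i + 1) i⟩
  | succ d ih =>
    intro g hg
    set h : ℕ → G := fun t => g (1 + t) * (g t)⁻¹ with hh
    obtain ⟨P, hPpos, hP⟩ := ih h (hg 1).1
    have Hstep : ∀ t, g (t + 1) = h t * g t := by
      intro t; simp [hh, Nat.add_comm 1 t]
    have key := periodic_of_step_periodic Hstep hP
    refine ⟨Nat.card G * P, Nat.mul_pos Nat.card_pos hPpos, fun i => ?_⟩
    rw [key (Nat.card G) i, pow_card_eq_one', one_mul]

/-- A polynomial sequence `g : ℕ → G` in a finite group `G` is periodic: there is a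
positive integer `P` with `g (i + P) = g i` for all `i`. -/
theorem polynomial_sequence_in_finite_group_periodic {G : Type*} [Group G] [Finite G]
    (g : ℕ → G) (hg : IsPoly g) :
    ∃ P : ℕ, 0 < P ∧ ∀ i : ℕ, g (i + P) = g i := by
  obtain ⟨d, hd⟩ := hg
  exact degLE_periodic d g hd

end PaperPoly
end
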